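/- arXiv:1007.1207 — 4 statements merged into one kernel-verified Lean document; each statement's English description precedes it below -/
import Mathlib

section
/- In the group algebra ℤ[S_n] (n ≥ 2), the product Ψ_1 Ψ_2 ⋯ Ψ_{n-1} equals the sum of all elements of S_n, where Ψ_1 = 1 + s_1 and Ψ_i = 1 + s_i·Ψ_{i-1} for i ≥ 2. -/
/-- The symmetric group `S_n`, realized as the permutations of `ℕ` fixing every
point outside the letters `{1, …, n}`. -/
def SsetN (n : ℕ) : Set (Equiv.Perm ℕ) := {w | ∀ x : ℕ, ¬(1 ≤ x ∧ x ≤ n) → w x = x}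

/-- `Ψ_i ∈ ℤ[S_n]`: `Ψ_1 = 1 + s_1` and `Ψ_i = 1 + s_i · Ψ_{i-1}`, where
`s_i = (i, i+1)`. -/
noncomputable def psiA : ℕ → MonoidAlgebra ℤ (Equiv.Perm ℕ)
  | 0 => 1
  | i + 1 =>
      1 + MonoidAlgebra.of ℤ (Equiv.Perm ℕ) (Equiv.swap (i + 1) (i + 2)) * psiA i

/-- The coset representatives: `eP m k = s_m s_{m-1} ⋯ s_{k+1}` for `k ≤ m`. -/
def eP : ℕ → ℕ → Equiv.Perm ℕ
  | 0, _ => 1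
  | m + 1, k => if k = m + 1 then 1 else Equiv.swap (m + 1) (m + 2) * eP m k

lemma psiA_eq (m : ℕ) :
    psiA m = ∑ k ∈ Finset.range (m + 1),
      MonoidAlgebra.of ℤ (Equiv.Perm ℕ) (eP m k) := by
  induction m with
  | zero => simp [psiA, eP, MonoidAlgebra.one_def]
  | succ m ih =>
    rw [show psiA (m + 1) = 1 + MonoidAlgebra.of ℤ (Equiv.Perm ℕ)
        (Equiv.swap (m + 1) (m + 2)) * psiA m from rfl, ih, Finset.mul_sum]
    conv_rhs => rw [Finset.sum_range_succ]
    rw [add_comm]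
    congr 1
    · refine Finset.sum_congr rfl fun k hk => ?_
      rw [Finset.mem_range] at hk
      rw [show eP (m + 1) k = if k = m + 1 then 1 else
          Equiv.swap (m + 1) (m + 2) * eP m k from rfl, if_neg (by omega), map_mul]
    · rw [show eP (m + 1) (m + 1) = if m + 1 = m + 1 then 1 else
          Equiv.swap (m + 1) (m + 2) * eP m (m + 1) from rfl, if_pos rfl, map_one]

lemma eP_apply_self {m k : ℕ} (h : k ≤ m) : eP m k (k + 1) = m + 1 := by
  induction m with
  | zero => interval_cases k; simp [eP]
  | succ m ih =>
    rw [show eP (m + 1) k = if k = m + 1 then 1 else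
        Equiv.swap (m + 1) (m + 2) * eP m k from rfl]
    rcases Nat.eq_or_lt_of_le h with h' | h'
    · rw [if_pos h']
      simp [h']
    · have hk : k ≤ m := by omega
      rw [if_neg (by omega), Equiv.Perm.mul_apply, ih hk, Equiv.swap_apply_left]

lemma eP_apply_of {m k x : ℕ} (hk : k ≤ m) (h : x ≤ k ∨ m + 1 < x) :
    eP m k x = x := by
  induction m with
  | zero => simp [eP]
  | succ m ih =>
    rw [show eP (m + 1) k = if k = m + 1 then 1 else
        Equiv.swap (m + 1) (m + 2) * eP m k from rfl]
    rcases Nat.eq_or_lt_of_le hk with h' | h'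
    · rw [if_pos h']; simp
    · have hk' : k ≤ m := by omega
      rw [if_neg (by omega), Equiv.Perm.mul_apply,
        ih hk' (by omega), Equiv.swap_apply_of_ne_of_ne (by omega) (by omega)]

theorem Equiv.Perm.inv_apply_self {α : Type*} (f : Equiv.Perm α) (x : α) : f⁻¹ (f x) = x :=
  Equiv.symm_apply_apply f x

theorem Equiv.Perm.apply_inv_self {α : Type*} (f : Equiv.Perm α) (x : α) : f (f⁻¹ x) = x :=
  Equiv.apply_symm_apply f x

lemma ssetN_inv_mem {n : ℕ} {w : Equiv.Perm ℕ} (hw : w ∈ SsetN n) :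
    w⁻¹ ∈ SsetN n := by
  intro x hx
  conv_lhs => rw [← hw x hx]
  exact Equiv.Perm.inv_apply_self w x

lemma ssetN_apply_le {n : ℕ} {w : Equiv.Perm ℕ} (hw : w ∈ SsetN n)
    {x : ℕ} (hx : x ≤ n) : w x ≤ n := by
  by_contra h
  push_neg at h
  have h2 : w (w x) = w x := hw (w x) (by omega)
  have := w.injective h2
  omega

lemma ssetN_finite (n : ℕ) : (SsetN n).Finite := by
  have hsub : (fun w : Equiv.Perm ℕ => fun i : Fin (n + 1) => (w i.1 : ℕ)) ''
      SsetN n ⊆ Set.pi Set.univ fun _ : Fin (n + 1) => Set.Iic n := by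
    rintro f ⟨w, hw, rfl⟩ i _
    rcases Nat.eq_zero_or_pos i.1 with h0 | h1
    · simp only [Set.mem_Iic, h0]
      rw [hw 0 (by omega)]; omega
    · exact ssetN_apply_le hw (by omega)
  have hfin : ((fun w : Equiv.Perm ℕ => fun i : Fin (n + 1) => (w i.1 : ℕ)) ''
      SsetN n).Finite :=
    (Set.Finite.pi fun _ => Set.finite_Iic n).subset hsub
  refine Set.Finite.of_finite_image hfin ?_
  intro w hw w' hw' hww
  ext x
  rcases le_or_gt x n with hx | hx
  · exact congrFun hww ⟨x, by omega⟩
  · rw [hw x (by omega), hw' x (by omega)]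

lemma key_mul (m : ℕ) :
    (∑ᶠ w ∈ SsetN m, MonoidAlgebra.of ℤ (Equiv.Perm ℕ) w) * psiA m =
      ∑ᶠ u ∈ SsetN (m + 1), MonoidAlgebra.of ℤ (Equiv.Perm ℕ) u := by
  have hfm := ssetN_finite m
  have hfm1 := ssetN_finite (m + 1)
  rw [← hfm.coe_toFinset, finsum_mem_coe_finset, ← hfm1.coe_toFinset,
    finsum_mem_coe_finset, psiA_eq, Finset.sum_mul_sum, ← Finset.sum_product']
  refine Finset.sum_nbij' (fun p => p.1 * eP m p.2)
    (fun u => (u * (eP m (u⁻¹ (m + 1) - 1))⁻¹, u⁻¹ (m + 1) - 1)) ?_ ?_ ?_ ?_ ?_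
  · rintro ⟨w, k⟩ hp
    rw [Finset.mem_product, hfm.mem_toFinset, Finset.mem_range] at hp
    obtain ⟨hw, hk⟩ := hp
    rw [hfm1.mem_toFinset]
    intro x hx
    have hk' : k ≤ m := by omega
    have he : eP m k x = x := eP_apply_of hk' (by omega)
    rw [Equiv.Perm.mul_apply, he, hw x (by omega)]
  · intro u hu
    rw [hfm1.mem_toFinset] at hu
    have hinv := ssetN_inv_mem hu
    -- u⁻¹ (m+1) is in [1, m+1]
    have h1 : 1 ≤ u⁻¹ (m + 1) ∧ u⁻¹ (m + 1) ≤ m + 1 := by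
      by_contra h
      have h2 := hinv (u⁻¹ (m + 1)) h
      have h3 : u⁻¹ (m + 1) = m + 1 := Equiv.injective u⁻¹ h2
      rw [h3] at h
      omega
    set k := u⁻¹ (m + 1) - 1 with hkdef
    have hk1 : k + 1 = u⁻¹ (m + 1) := by omega
    have hk : k ≤ m := by omega
    rw [Finset.mem_product, hfm.mem_toFinset, Finset.mem_range]
    refine ⟨?_, by omega⟩
    intro x hx
    rw [Equiv.Perm.mul_apply]
    by_cases hxm : x = m + 1
    · have h4 : (eP m k)⁻¹ x = k + 1 := by
        rw [hxm, ← eP_apply_self hk, Equiv.Perm.inv_apply_self]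
      rw [h4, show u (k + 1) = m + 1 from by
        rw [hk1, Equiv.Perm.apply_inv_self], hxm]
    · have hout : ¬(1 ≤ x ∧ x ≤ m + 1) := by omega
      have he : eP m k x = x := eP_apply_of hk (by omega)
      have h5 : (eP m k)⁻¹ x = x := by
        conv_lhs => rw [← he, Equiv.Perm.inv_apply_self]
      rw [h5, hu x hout]
  · rintro ⟨w, k⟩ hp
    rw [Finset.mem_product, hfm.mem_toFinset, Finset.mem_range] at hp
    obtain ⟨hw, hk⟩ := hp
    have hk' : k ≤ m := by omega
    have hwinv := ssetN_inv_mem hw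
    have hfix : (w * eP m k)⁻¹ (m + 1) = k + 1 := by
      rw [mul_inv_rev, Equiv.Perm.mul_apply,
        hwinv (m + 1) (by omega), ← eP_apply_self hk', Equiv.Perm.inv_apply_self]
    simp only [hfix]
    have : k + 1 - 1 = k := by omega
    rw [this]
    ext
    · simp [mul_assoc]
    · rfl
  · intro u hu
    simp [mul_assoc]
  · rintro ⟨w, k⟩ hp
    rw [map_mul]

lemma key (n : ℕ) (hn : 1 ≤ n) :
    ((List.range (n - 1)).map fun i => psiA (i + 1)).prod =
      ∑ᶠ w ∈ SsetN n, MonoidAlgebra.of ℤ (Equiv.Perm ℕ) w := by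
  induction n, hn using Nat.le_induction with
  | base =>
    have hS : SsetN 1 = {1} := by
      ext w
      constructor
      · intro hw
        have hfix : ∀ x : ℕ, x ≠ 1 → w x = x := fun x hx => hw x (by omega)
        have h1 : w 1 = 1 := by
          by_contra h
          have := hfix (w 1) h
          exact h (w.injective this)
        ext x
        rcases eq_or_ne x 1 with rfl | hx
        · simpa using h1
        · simpa using hfix x hx
      · rintro rfl
        intro x _
        rfl
    simp [hS, finsum_mem_singleton, MonoidAlgebra.one_def]
  | succ m hm ih =>
    have h1 : m + 1 - 1 = (m - 1) + 1 := by omega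
    rw [h1, List.range_succ, List.map_append, List.prod_append, ih,
      List.map_singleton, List.prod_singleton, show m - 1 + 1 = m from by omega,
      key_mul]

/-- In `ℤ[S_n]` (`n ≥ 2`), `Ψ_1 Ψ_2 ⋯ Ψ_{n-1}` equals the sum of all elements of `S_n`. -/
theorem psi_factorization_A (n : ℕ) (hn : 2 ≤ n) :
    ((List.range (n - 1)).map fun i => psiA (i + 1)).prod =
      ∑ᶠ w ∈ SsetN n, MonoidAlgebra.of ℤ (Equiv.Perm ℕ) w :=
  key n (by omega)
end

section
/- The joint generating function of the sorting index and cycle number over S_n factors as ∑_{w ∈ S_n} q^{sor(w)} t^{cyc(w)} = ∏_{i=1}^{n} (t + q + q^2 + ⋯ + q^{i-1}). -/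
/-- The number of cycles of a permutation (including fixed points). -/
def cycA {n : ℕ} (w : Equiv.Perm (Fin n)) : ℕ :=
  w.cycleType.card + (Finset.univ.filter fun x => w x = x).card

/-- `L` is the factorization of `w` as a product of transpositions `(i₁ j₁)⋯(i_k j_k)`
with `i_s < j_s` and `j₁ < j₂ < ⋯ < j_k`. -/
def SortFactA {n : ℕ} (w : Equiv.Perm (Fin n)) (L : List (Fin n × Fin n)) : Prop :=
  (∀ p ∈ L, p.1 < p.2) ∧ List.Chain' (· < ·) (L.map Prod.snd) ∧
    (L.map fun p => Equiv.swap p.1 p.2).prod = w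

open Equiv Equiv.Perm Finset

variable {α : Type*} [DecidableEq α] [Fintype α]

lemma perm_apply_inv_self' {β : Type*} (f : Perm β) (x : β) : f (f⁻¹ x) = x :=
  Equiv.apply_symm_apply f x

lemma perm_inv_apply_self' {β : Type*} (f : Perm β) (x : β) : f⁻¹ (f x) = x :=
  Equiv.symm_apply_apply f x

/-- cycle count (including fixed points), support version -/
def cycB (w : Perm α) : ℕ :=
  Multiset.card w.cycleType + (Fintype.card α - w.support.card)

lemma cycB_split (w : Perm α) (x : α) (hx : w x ≠ x) :
    cycB (Equiv.swap x (w x) * w) = cycB w + 1 := by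
  classical
  set c := w.cycleOf x with hc_def
  have hc : c ∈ w.cycleFactorsFinset :=
    cycleOf_mem_cycleFactorsFinset_iff.mpr (mem_support.2 hx)
  have hcyc : c.IsCycle := isCycle_cycleOf w hx
  have hcx : c x = w x := cycleOf_apply_self w x
  have hccx : c (c x) = w (w x) := by
    rw [hcx, cycleOf_apply_apply_self]
  have hcomm : Commute c w := self_mem_cycle_factors_commute hc
  set ρ := w * c⁻¹ with hρ_def
  have hρcT : ρ.cycleType = w.cycleType - c.cycleType :=
    cycleType_mul_inv_mem_cycleFactorsFinset_eq_sub hc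
  have hcT_le : c.cycleType ≤ w.cycleType := cycleType_le_of_mem_cycleFactorsFinset hc
  have hcsupp : ∀ z ∈ c.support, c z = w z := (mem_cycleFactorsFinset_iff.mp hc).2
  have hdcρ : Perm.Disjoint c ρ := by
    intro y
    by_cases hy : c y = y
    · exact Or.inl hy
    · right
      have hy' : c⁻¹ y ∈ c.support := by
        rw [← Perm.support_inv]
        exact apply_mem_support.mpr (by rwa [Perm.support_inv, mem_support])
      have := hcsupp _ hy'
      show w (c⁻¹ y) = y
      rw [← this, perm_apply_inv_self']
  have hxsupc : x ∈ c.support := by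
    rw [mem_support, hcx]; exact hx
  have hwxsupc : c x ∈ c.support := apply_mem_support.mpr hxsupc
  have hSw : w.support.card = c.support.card + ρ.support.card := by
    have : c * ρ = w := by
      rw [hρ_def, ← mul_assoc, hcomm.eq, mul_assoc, mul_inv_cancel, mul_one]
    rw [← this, hdcρ.card_support_mul]
  have hcard_c : Multiset.card c.cycleType = 1 := by
    rw [hcyc.cycleType]; rfl
  have hxw : x ∈ w.support := mem_support.2 hx
  have hSle : w.support.card ≤ Fintype.card α := Finset.card_le_univ _
  have hS1 : 1 ≤ w.support.card := Finset.card_pos.mpr ⟨x, mem_support.2 hx⟩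
  have hT1 : 1 ≤ Multiset.card w.cycleType := by
    have := Multiset.card_le_card hcT_le
    omega
  by_cases h2 : w (w x) = x
  · -- degenerate: c = swap x (w x), τ = ρ
    have hceq : c = Equiv.swap x (c x) :=
      hcyc.eq_swap_of_apply_apply_eq_self (by rw [hcx]; exact hx) (by rw [hccx]; exact h2)
    have hcinv : c⁻¹ = c := by rw [hceq]; exact Equiv.swap_inv _ _
    have hτ : Equiv.swap x (w x) * w = ρ := by
      rw [hρ_def, ← hcx, ← hceq, hcinv, hcomm.eq]
    have hsc : c.support.card = 2 := by
      rw [hceq]; exact Equiv.Perm.card_support_swap (by rw [hcx]; exact Ne.symm hx)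
    have hcT2 : c.cycleType = {2} := by
      rw [hcyc.cycleType, hsc]
    have hTτ : Multiset.card ρ.cycleType = Multiset.card w.cycleType - 1 := by
      rw [hρcT, Multiset.card_sub hcT_le, hcard_c]
    unfold cycB
    rw [hτ, hTτ]
    omega
  · -- nondegenerate
    have hd : (Equiv.swap x (c x) * c).IsCycle :=
      hcyc.swap_mul (by rw [hcx]; exact hx) (by rw [hccx]; exact h2)
    have hτ : Equiv.swap x (w x) * w = (Equiv.swap x (c x) * c) * ρ := by
      rw [hρ_def, ← hcx, mul_assoc]
      congr 1
      rw [← mul_assoc, hcomm.eq, mul_assoc, mul_inv_cancel, mul_one]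
    have hdisj : Perm.Disjoint (Equiv.swap x (c x) * c) ρ := by
      intro y
      rcases hdcρ y with hy | hy
      · left
        have hy1 : y ∉ c.support := by rwa [mem_support, not_not]
        have hyx : y ≠ x := fun h => hy1 (h ▸ hxsupc)
        have hycx : y ≠ c x := fun h => hy1 (h ▸ hwxsupc)
        show Equiv.swap x (c x) (c y) = y
        rw [hy, Equiv.swap_apply_of_ne_of_ne hyx hycx]
      · exact Or.inr hy
    have hcTτ : (Equiv.swap x (w x) * w).cycleType
        = (Equiv.swap x (c x) * c).cycleType + ρ.cycleType := by
      rw [hτ]; exact hdisj.cycleType_mul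
    have hsupτ : (Equiv.swap x (w x) * w).support = w.support \ {x} :=
      Equiv.Perm.support_swap_mul_eq w x h2
    have hdcard : Multiset.card (Equiv.swap x (c x) * c).cycleType = 1 := by
      rw [hd.cycleType]; rfl
    have hTτ : Multiset.card ρ.cycleType = Multiset.card w.cycleType - 1 := by
      rw [hρcT, Multiset.card_sub hcT_le, hcard_c]
    have hScard : (Equiv.swap x (w x) * w).support.card = w.support.card - 1 := by
      rw [hsupτ, Finset.card_sdiff_of_subset (by simpa using hxw)]
      simp
    unfold cycB
    rw [hcTτ, Multiset.card_add, hdcard, hTτ, hScard]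
    omega

namespace SorAux

open Fin

/-- equivalence between `Fin n` and the complement of `last n`. -/
def eFin (n : ℕ) : Fin n ≃ {x : Fin (n + 1) // x ≠ Fin.last n} where
  toFun i := ⟨i.castSucc, (Fin.castSucc_lt_last i).ne⟩
  invFun x := x.1.castPred x.2
  left_inv i := by simp
  right_inv x := by simp

/-- lift a permutation of `Fin n` to `Fin (n+1)` fixing `last n`. -/
def liftP {n : ℕ} (w : Perm (Fin n)) : Perm (Fin (n + 1)) :=
  w.extendDomain (eFin n)

lemma liftP_castSucc {n : ℕ} (w : Perm (Fin n)) (i : Fin n) :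
    liftP w i.castSucc = (w i).castSucc := by
  have : (i.castSucc : Fin (n+1)) ≠ Fin.last n := (Fin.castSucc_lt_last i).ne
  rw [liftP, Equiv.Perm.extendDomain_apply_subtype w (eFin n) this]
  congr 1

lemma liftP_last {n : ℕ} (w : Perm (Fin n)) : liftP w (Fin.last n) = Fin.last n :=
  Equiv.Perm.extendDomain_apply_not_subtype _ _ (by simp)

lemma liftP_injective {n : ℕ} : Function.Injective (liftP (n := n)) := by
  intro u v h
  apply Equiv.ext
  intro i
  have h2 := congrArg (fun σ : Perm (Fin (n+1)) => σ i.castSucc) h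
  simp only [liftP_castSucc] at h2
  exact Fin.castSucc_injective _ h2

lemma liftP_one {n : ℕ} : liftP (1 : Perm (Fin n)) = 1 :=
  Equiv.Perm.extendDomain_one _

lemma liftP_mul {n : ℕ} (u v : Perm (Fin n)) : liftP (u * v) = liftP u * liftP v :=
  (Equiv.Perm.extendDomain_mul _ u v).symm

lemma liftP_swap {n : ℕ} (a b : Fin n) :
    liftP (Equiv.swap a b) = Equiv.swap a.castSucc b.castSucc := by
  ext x
  cases x using Fin.lastCases with
  | last =>
    rw [liftP_last, Equiv.swap_apply_of_ne_of_ne (Fin.castSucc_lt_last a).ne'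
      (Fin.castSucc_lt_last b).ne']
  | cast i =>
    rw [liftP_castSucc]
    rcases Equiv.swap_apply_def a b i with _
    by_cases hia : i = a
    · subst hia; simp
    · by_cases hib : i = b
      · subst hib; simp
      · rw [Equiv.swap_apply_of_ne_of_ne hia hib,
          Equiv.swap_apply_of_ne_of_ne (by simpa [Fin.castSucc_inj] using hia)
            (by simpa [Fin.castSucc_inj] using hib)]

/-- lower a permutation of `Fin (n+1)` (intended: one fixing `last n`). -/
def lowerP {n : ℕ} (σ : Perm (Fin (n + 1))) : Perm (Fin n) :=
  Equiv.removeNone ((finSuccEquivLast.symm.trans σ).trans finSuccEquivLast)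

lemma liftP_lowerP {n : ℕ} (σ : Perm (Fin (n + 1))) (hσ : σ (Fin.last n) = Fin.last n) :
    liftP (lowerP σ) = σ := by
  apply Equiv.ext
  intro x
  cases x using Fin.lastCases with
  | last => rw [liftP_last, hσ]
  | cast i =>
    rw [liftP_castSucc]
    set e := (finSuccEquivLast.symm.trans σ).trans finSuccEquivLast with he
    have hne : σ i.castSucc ≠ Fin.last n := by
      intro h
      exact (Fin.castSucc_lt_last i).ne (σ.injective (h.trans hσ.symm))
    have hcast : ((σ i.castSucc).castPred hne).castSucc = σ i.castSucc :=
      Fin.castSucc_castPred _ _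
    have hsome : e (some i) = some ((σ i.castSucc).castPred hne) := by
      simp only [he, Equiv.trans_apply, finSuccEquivLast_symm_some]
      exact (congrArg finSuccEquivLast hcast).symm.trans (finSuccEquivLast_castSucc _)
    have h2 := Equiv.removeNone_some e ⟨_, hsome⟩
    rw [hsome] at h2
    have h3 : e.removeNone i = (σ i.castSucc).castPred hne := Option.some_injective _ h2
    show (e.removeNone i).castSucc = σ i.castSucc
    rw [h3]
    exact hcast

end SorAux

namespace SorAux

lemma sigma_fix {n : ℕ} (w : Perm (Fin (n + 1))) :
    (Equiv.swap (Fin.last n) (w (Fin.last n)) * w) (Fin.last n) = Fin.last n := by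
  rw [Perm.mul_apply, Equiv.swap_apply_right]

lemma sigma_eq {n : ℕ} (w : Perm (Fin (n + 1))) :
    Equiv.swap (Fin.last n) (w (Fin.last n)) * w
      = w * Equiv.swap (w⁻¹ (Fin.last n)) (Fin.last n) := by
  rw [Equiv.mul_swap_eq_swap_mul, perm_apply_inv_self']

/-- The sorting index, defined recursively. -/
def sorN : {n : ℕ} → Perm (Fin n) → ℕ
  | 0, _ => 0
  | (n+1), w =>
    sorN (lowerP (Equiv.swap (Fin.last n) (w (Fin.last n)) * w)) + (n - (w⁻¹ (Fin.last n) : ℕ))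

lemma sorN_zero (w : Perm (Fin 0)) : sorN w = 0 := rfl

lemma sorN_succ {n : ℕ} (w : Perm (Fin (n + 1))) :
    sorN w = sorN (lowerP (Equiv.swap (Fin.last n) (w (Fin.last n)) * w))
      + (n - (w⁻¹ (Fin.last n) : ℕ)) := rfl

/-- the inverse bijection `S_n × [n+1] → S_{n+1}` -/
def gmap {n : ℕ} (p : Perm (Fin n) × Fin (n + 1)) : Perm (Fin (n + 1)) :=
  liftP p.1 * Equiv.swap p.2 (Fin.last n)

lemma liftP_inv_last {n : ℕ} (v : Perm (Fin n)) : (liftP v)⁻¹ (Fin.last n) = Fin.last n := by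
  rw [Equiv.Perm.inv_eq_iff_eq]
  exact (liftP_last v).symm

lemma gmap_inv_last {n : ℕ} (p : Perm (Fin n) × Fin (n + 1)) :
    (gmap p)⁻¹ (Fin.last n) = p.2 := by
  rw [gmap, mul_inv_rev, Perm.mul_apply, liftP_inv_last]
  simp

lemma gmap_sigma {n : ℕ} (p : Perm (Fin n) × Fin (n + 1)) :
    Equiv.swap (Fin.last n) (gmap p (Fin.last n)) * gmap p = liftP p.1 := by
  rw [sigma_eq, gmap_inv_last, gmap, mul_assoc, Equiv.swap_mul_self, mul_one]

lemma lowerP_liftP {n : ℕ} (v : Perm (Fin n)) : lowerP (liftP v) = v :=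
  liftP_injective (liftP_lowerP (liftP v) (liftP_last v))

lemma gmap_injective {n : ℕ} : Function.Injective (gmap (n := n)) := by
  intro p p' h
  have h2 : p.2 = p'.2 := by rw [← gmap_inv_last p, ← gmap_inv_last p', h]
  have h1 : liftP p.1 = liftP p'.1 := by
    have := congrArg (fun σ => σ * Equiv.swap p.2 (Fin.last n)) h
    simpa [gmap, mul_assoc, h2, Equiv.swap_mul_self] using this
  exact Prod.ext (liftP_injective h1) h2

lemma gmap_bijective {n : ℕ} : Function.Bijective (gmap (n := n)) := by
  rw [Fintype.bijective_iff_injective_and_card]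
  refine ⟨gmap_injective, ?_⟩
  simp [Fintype.card_perm, Fintype.card_fin, Nat.factorial_succ, mul_comm]

lemma sorN_gmap {n : ℕ} (p : Perm (Fin n) × Fin (n + 1)) :
    sorN (gmap p) = sorN p.1 + (n - (p.2 : ℕ)) := by
  rw [sorN_succ, gmap_inv_last, gmap_sigma, lowerP_liftP]

lemma cycB_liftP {n : ℕ} (v : Perm (Fin n)) : cycB (liftP v) = cycB v + 1 := by
  unfold cycB
  rw [liftP, Equiv.Perm.cycleType_extendDomain, Equiv.Perm.support_extend_domain,
    Finset.card_map]
  have hs : v.support.card ≤ n := by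
    simpa using Finset.card_le_univ v.support
  simp only [Fintype.card_fin]
  omega

lemma cycB_gmap {n : ℕ} (p : Perm (Fin n) × Fin (n + 1)) :
    cycB (gmap p) = cycB p.1 + (if p.2 = Fin.last n then 1 else 0) := by
  by_cases hi : p.2 = Fin.last n
  · have : gmap p = liftP p.1 := by
      rw [gmap, hi, Equiv.swap_self, ← Equiv.Perm.one_def, mul_one]
    rw [this, hi, if_pos rfl, cycB_liftP]
  · have hwl : gmap p (Fin.last n) ≠ Fin.last n := by
      intro h
      apply hi
      have h2 := congrArg (fun y => (gmap p)⁻¹ y) h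
      rw [perm_inv_apply_self'] at h2
      exact (gmap_inv_last p).symm.trans h2.symm
    have hsplit := cycB_split (gmap p) (Fin.last n) hwl
    rw [gmap_sigma, cycB_liftP] at hsplit
    rw [if_neg hi]
    omega

end SorAux

namespace SorAux

lemma liftP_prod {m : ℕ} (l : List (Perm (Fin m))) :
    (l.map liftP).prod = liftP l.prod := by
  induction l with
  | nil => simp [liftP_one]
  | cons a l ih => simp [liftP_mul, ih]

lemma exF : ∀ {m : ℕ} (w : Perm (Fin m)),
    ∃ L, SortFactA w L ∧ (L.map fun p => ((p.2 : ℕ) - (p.1 : ℕ))).sum = sorN w := by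
  intro m
  induction m with
  | zero =>
    intro w
    have hw : w = 1 := Equiv.ext fun x => x.elim0
    exact ⟨[], ⟨by simp, List.isChain_nil, by simp [hw]⟩, rfl⟩
  | succ n ih =>
    intro w
    set i := w⁻¹ (Fin.last n) with hi_def
    set σ := Equiv.swap (Fin.last n) (w (Fin.last n)) * w with hσ_def
    have hσfix : σ (Fin.last n) = Fin.last n := sigma_fix w
    have hlift : liftP (lowerP σ) = σ := liftP_lowerP σ hσfix
    obtain ⟨L', ⟨hp', hc', hprod'⟩, hsum'⟩ := ih (lowerP σ)
    set Lc : List (Fin (n+1) × Fin (n+1)) :=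
      L'.map (fun p => (p.1.castSucc, p.2.castSucc)) with hLc_def
    have hprodcast : (Lc.map fun p => Equiv.swap p.1 p.2).prod = σ := by
      rw [hLc_def, List.map_map]
      have hcomp : ((fun p : Fin (n+1) × Fin (n+1) => Equiv.swap p.1 p.2) ∘
          (fun p : Fin n × Fin n => (p.1.castSucc, p.2.castSucc)))
          = liftP ∘ (fun p : Fin n × Fin n => Equiv.swap p.1 p.2) := by
        funext p
        exact (liftP_swap p.1 p.2).symm
      rw [hcomp, ← List.map_map, liftP_prod, hprod', hlift]
    have hpcast : ∀ p ∈ Lc, p.1 < p.2 := by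
      intro p hp
      rw [hLc_def, List.mem_map] at hp
      obtain ⟨q, hq, rfl⟩ := hp
      simpa [Fin.castSucc_lt_castSucc_iff] using hp' q hq
    have hccast : List.Chain' (· < ·) (Lc.map Prod.snd) := by
      rw [hLc_def, List.map_map]
      have hcomp : (Prod.snd ∘ fun p : Fin n × Fin n => (p.1.castSucc, p.2.castSucc))
          = Fin.castSucc ∘ Prod.snd := rfl
      rw [hcomp, ← List.map_map]
      exact List.isChain_map_of_isChain _
        (fun a b h => by simpa [Fin.castSucc_lt_castSucc_iff] using h) hc'
    have hsumcast : (Lc.map fun p => ((p.2 : ℕ) - (p.1 : ℕ))).sum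
        = (L'.map fun p => ((p.2 : ℕ) - (p.1 : ℕ))).sum := by
      rw [hLc_def, List.map_map]
      rfl
    have hmemLc : ∀ x ∈ Lc.map Prod.snd, x < Fin.last n := by
      intro x hx
      rw [hLc_def, List.map_map] at hx
      rw [List.mem_map] at hx
      obtain ⟨q, _, rfl⟩ := hx
      exact Fin.castSucc_lt_last _
    by_cases hil : i = Fin.last n
    · have hwlast : w (Fin.last n) = Fin.last n := by
        have h2 := congrArg w hil
        rw [hi_def, perm_apply_inv_self'] at h2
        exact h2.symm
      have hσw : σ = w := by
        rw [hσ_def, hwlast, Equiv.swap_self, ← Equiv.Perm.one_def, one_mul]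
      refine ⟨Lc, ⟨hpcast, hccast, by rw [hprodcast, hσw]⟩, ?_⟩
      rw [hsumcast, hsum', sorN_succ, ← hσ_def, ← hi_def, hil]
      simp
    · have hilt : i < Fin.last n := lt_of_le_of_ne (Fin.le_last i) hil
      refine ⟨Lc ++ [(i, Fin.last n)], ⟨?_, ?_, ?_⟩, ?_⟩
      · intro p hp
        rcases List.mem_append.mp hp with h | h
        · exact hpcast p h
        · rw [List.mem_singleton] at h
          rw [h]
          exact hilt
      · rw [List.map_append]
        rw [List.Chain', List.isChain_append]
        refine ⟨hccast, List.isChain_singleton _, ?_⟩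
        intro x hx y hy
        have hxmem : x ∈ Lc.map Prod.snd := by
          rcases List.mem_getLast?_eq_getLast hx with ⟨hne, rfl⟩
          exact List.getLast_mem hne
        have hy' : y = Fin.last n := by simpa using hy.symm
        rw [hy']
        exact hmemLc x hxmem
      · rw [List.map_append, List.prod_append]
        simp only [List.map_cons, List.map_nil, List.prod_cons, List.prod_nil, mul_one]
        rw [hprodcast, hσ_def, sigma_eq, ← hi_def, mul_assoc, Equiv.swap_mul_self, mul_one]
      · rw [List.map_append, List.sum_append, hsumcast, hsum']
        simp only [List.map_cons, List.map_nil, List.sum_cons, List.sum_nil, add_zero]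
        rw [sorN_succ, ← hσ_def, ← hi_def, Fin.val_last]

end SorAux

lemma cycA_eq_cycB {m : ℕ} (w : Perm (Fin m)) : cycA w = cycB w := by
  unfold cycA cycB
  congr 1
  have h : (Finset.univ.filter fun x => w x = x) = Finset.univ \ w.support := by
    ext y
    simp [Equiv.Perm.mem_support]
  rw [h, Finset.card_sdiff_of_subset (Finset.subset_univ _), Finset.card_univ, Fintype.card_fin]

lemma sum_reflect {R : Type} [CommRing R] (q : R) (n : ℕ) :
    ∑ j ∈ Finset.range n, q ^ (n - j) = ∑ j ∈ Finset.Icc 1 n, q ^ j := by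
  induction n with
  | zero => simp
  | succ n ih =>
    rw [Finset.sum_range_succ']
    have h1 : ∀ j ∈ Finset.range n, q ^ (n + 1 - (j + 1)) = q ^ (n - j) := by
      intro j hj
      congr 1
      omega
    rw [Finset.sum_congr rfl h1, ih, Finset.sum_Icc_succ_top (Nat.le_add_left 1 n)]
    simp only [Nat.sub_zero]

namespace SorAux

lemma mainSum {R : Type} [CommRing R] (q t : R) (n : ℕ) :
    ∑ w : Perm (Fin n), q ^ sorN w * t ^ cycB w
      = ∏ i ∈ Finset.range n, (t + ∑ j ∈ Finset.Icc 1 i, q ^ j) := by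
  induction n with
  | zero =>
    rw [Finset.prod_range_zero]
    have h : ∀ w : Perm (Fin 0), q ^ sorN w * t ^ cycB w = 1 := by
      intro w
      have hw : w = 1 := Equiv.ext fun x => x.elim0
      subst hw
      simp [sorN_zero, cycB, Equiv.Perm.cycleType_one]
    rw [Fintype.sum_congr _ _ h, Finset.sum_const, Finset.card_univ, Fintype.card_perm]
    simp
  | succ n ih =>
    have hbij := Fintype.sum_bijective (gmap (n := n)) gmap_bijective
      (fun p => q ^ sorN (gmap p) * t ^ cycB (gmap p))
      (fun w => q ^ sorN w * t ^ cycB w) (fun p => rfl)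
    rw [← hbij, Fintype.sum_prod_type]
    have hinner : ∀ v : Perm (Fin n),
        ∑ i : Fin (n + 1), q ^ sorN (gmap (v, i)) * t ^ cycB (gmap (v, i))
          = (q ^ sorN v * t ^ cycB v) * (t + ∑ j ∈ Finset.Icc 1 n, q ^ j) := by
      intro v
      have h1 : ∀ i : Fin (n + 1), q ^ sorN (gmap (v, i)) * t ^ cycB (gmap (v, i))
          = q ^ (sorN v + (n - (i : ℕ))) * t ^ (cycB v + if i = Fin.last n then 1 else 0) := by
        intro i
        rw [sorN_gmap, cycB_gmap]
      rw [Fintype.sum_congr _ _ h1, Fin.sum_univ_castSucc]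
      have hlast : q ^ (sorN v + (n - ((Fin.last n : Fin (n + 1)) : ℕ)))
          * t ^ (cycB v + if (Fin.last n : Fin (n + 1)) = Fin.last n then 1 else 0)
          = (q ^ sorN v * t ^ cycB v) * t := by
        rw [if_pos rfl, Fin.val_last, Nat.sub_self, add_zero, pow_add, pow_succ]
        ring
      have hcast : ∀ i : Fin n, q ^ (sorN v + (n - ((i.castSucc : Fin (n + 1)) : ℕ)))
          * t ^ (cycB v + if (i.castSucc : Fin (n + 1)) = Fin.last n then 1 else 0)
          = (q ^ sorN v * t ^ cycB v) * q ^ (n - (i : ℕ)) := by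
        intro i
        rw [if_neg (Fin.castSucc_lt_last i).ne, add_zero, Fin.coe_castSucc, pow_add]
        ring
      rw [Finset.sum_congr rfl fun i _ => hcast i, hlast, ← Finset.mul_sum]
      have h2 : ∑ i : Fin n, q ^ (n - (i : ℕ)) = ∑ j ∈ Finset.Icc 1 n, q ^ j := by
        rw [Fin.sum_univ_eq_sum_range (fun j => q ^ (n - j)) n, sum_reflect]
      rw [h2]
      ring
    rw [Finset.sum_congr rfl fun v _ => hinner v, ← Finset.sum_mul, ih,
      Finset.prod_range_succ]

end SorAux

/-- If `sor` is the sorting index, i.e. `sor w = ∑_s (j_s - i_s)` for the unique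
factorization `w = t_{i₁ j₁}⋯t_{i_k j_k}` with `i_s < j_s`, `j₁ < ⋯ < j_k`, then
`∑_{w ∈ S_n} q^{sor w} t^{cyc w} = ∏_{i=1}^{n} (t + q + q² + ⋯ + q^{i-1})`. -/
theorem sor_cyc_generating_function {R : Type} [CommRing R] (n : ℕ) (q t : R)
    (sor : Equiv.Perm (Fin n) → ℕ)
    (hsor : ∀ w L, SortFactA w L → sor w = (L.map fun p => (p.2 : ℕ) - (p.1 : ℕ)).sum) :
    ∑ w : Equiv.Perm (Fin n), q ^ sor w * t ^ cycA w =
      ∏ i ∈ Finset.range n, (t + ∑ j ∈ Finset.Icc 1 i, q ^ j) := by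
  have hs : ∀ w : Perm (Fin n), sor w = SorAux.sorN w := by
    intro w
    obtain ⟨L, hL, hsum⟩ := SorAux.exF w
    rw [hsor w L hL, hsum]
  calc ∑ w : Equiv.Perm (Fin n), q ^ sor w * t ^ cycA w
      = ∑ w : Equiv.Perm (Fin n), q ^ SorAux.sorN w * t ^ cycB w :=
        Finset.sum_congr rfl fun w _ => by rw [hs, cycA_eq_cycB]
    _ = ∏ i ∈ Finset.range n, (t + ∑ j ∈ Finset.Icc 1 i, q ^ j) := SorAux.mainSum q t n
end

section
/- The pairs of statistics (inv, m) and (sor, cyc) are equidistributed over S_n: ∑_{w ∈ S_n} q^{inv(w)} t^{m(w)} = ∑_{w ∈ S_n} q^{sor(w)} t^{cyc(w)}. In particular, sor is Mahonian and m has the Stirling distribution. -/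
/-- The number of inversions of `w`: pairs `i < j` with `w i > w j`. -/
def invA {n : ℕ} (w : Equiv.Perm (Fin n)) : ℕ :=
  (Finset.univ.filter fun p : Fin n × Fin n => p.1 < p.2 ∧ w p.2 < w p.1).card

/-- The number of positions of `w` that are right-to-left minima. -/
def mA {n : ℕ} (w : Equiv.Perm (Fin n)) : ℕ :=
  (Finset.univ.filter fun i : Fin n => ∀ j : Fin n, i < j → w i < w j).card

section Aux
open Equiv Equiv.Perm Finset

lemma isCycle_mul_swap {α : Type*} [Fintype α] [DecidableEq α]
    {c : Perm α} (hc : c.IsCycle) {i j : α} (hij : i ≠ j)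
    (hi : c i ≠ i) (hj : c j = j) :
    (c * Equiv.swap i j).IsCycle ∧ (c * Equiv.swap i j).support = insert j c.support := by
  set c' := c * Equiv.swap i j with hc'
  have hcij : c i ≠ j := fun h => hij (c.injective (h.trans hj.symm))
  have hc'i : c' i = j := by simp [hc', hj]
  have hc'j : c' j = c i := by simp [hc']
  have hc'x : ∀ x, x ≠ i → x ≠ j → c' x = c x := by
    intro x h1 h2; simp [hc', Equiv.swap_apply_of_ne_of_ne h1 h2]
  have hscij : c'.SameCycle i j := ⟨1, by simpa using hc'i⟩
  have traj : ∀ k : ℕ, c'.SameCycle i ((c ^ k) i) := by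
    intro k
    induction k with
    | zero => exact SameCycle.refl _ _
    | succ k ih =>
      have hpow : (c ^ (k+1)) i = c ((c ^ k) i) := by
        rw [pow_succ', Perm.mul_apply]
      rw [hpow]
      by_cases hz : (c ^ k) i = i
      · rw [hz, ← hc'j]
        exact hscij.apply_right
      · have hzs : (c ^ k) i ∈ c.support := by
          rw [pow_apply_mem_support, mem_support]; exact hi
        have hzj : (c ^ k) i ≠ j := by
          intro h; rw [h, mem_support] at hzs; exact hzs hj
        rw [← hc'x _ hz hzj]
        exact ih.apply_right
  have hsamesupp : ∀ y ∈ c.support, c'.SameCycle i y := by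
    intro y hy
    obtain ⟨k, hk⟩ := hc.exists_pow_eq hi (mem_support.mp hy)
    exact hk ▸ traj k
  constructor
  · refine ⟨i, by rw [hc'i]; exact fun h => hij h.symm, fun y hy => ?_⟩
    by_cases h1 : y = i
    · exact h1 ▸ SameCycle.refl _ _
    · by_cases h2 : y = j
      · exact h2 ▸ hscij
      · rw [hc'x y h1 h2] at hy
        exact hsamesupp y (mem_support.mpr hy)
  · ext x
    simp only [mem_support, Finset.mem_insert]
    by_cases h1 : x = i
    · rw [h1, hc'i]
      constructor
      · intro _; right; exact hi
      · intro _; exact fun h => hij h.symm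
    · by_cases h2 : x = j
      · rw [h2, hc'j]
        simp [hcij]
      · rw [hc'x x h1 h2]
        simp [h2]

lemma cycA_mul_swap {n : ℕ} {g : Perm (Fin n)} {i j : Fin n} (hij : i ≠ j) (hj : g j = j) :
    cycA (g * Equiv.swap i j) + 1 = cycA g := by
  classical
  set τ := Equiv.swap i j with hτ
  have hjs : j ∉ g.support := by rw [mem_support]; exact fun h => h hj
  have fixcard : ∀ w : Perm (Fin n),
      (Finset.univ.filter fun x => w x = x).card = n - w.support.card := by
    intro w
    have : (Finset.univ.filter fun x => w x = x) = w.supportᶜ := by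
      ext x; simp [mem_support]
    rw [this, Finset.card_compl, Fintype.card_fin]
  have suppcard : ∀ w : Perm (Fin n), w.support.card ≤ n := by
    intro w
    simpa using Finset.card_le_card (Finset.subset_univ w.support)
  by_cases hgi : g i = i
  · -- disjoint case
    have hd : g.Disjoint τ := by
      intro x
      by_cases h1 : x = i
      · left; rw [h1, hgi]
      · by_cases h2 : x = j
        · left; rw [h2, hj]
        · right; exact Equiv.swap_apply_of_ne_of_ne h1 h2
    have hct : (g * τ).cycleType = g.cycleType + τ.cycleType := hd.cycleType_mul
    have hτc : τ.cycleType = [2] := by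
      rw [(isCycle_swap hij).cycleType, card_support_swap hij]
      exact rfl
    have hsupp : (g * τ).support = g.support ∪ {i, j} := by
      rw [hd.support_mul, support_swap hij]
    have hdisj2 : Disjoint g.support ({i, j} : Finset (Fin n)) := by
      rw [Finset.disjoint_insert_right, Finset.disjoint_singleton_right]
      constructor
      · rw [mem_support]; exact fun h => h hgi
      · exact hjs
    have hcard : (g * τ).support.card = g.support.card + 2 := by
      rw [hsupp, Finset.card_union_of_disjoint hdisj2, Finset.card_insert_of_notMem
        (by simp [hij]), Finset.card_singleton]
    have h2n := suppcard (g * τ)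
    rw [hcard] at h2n
    unfold cycA
    rw [fixcard, fixcard, hct, hτc, hcard, Multiset.card_add]
    simp only [Multiset.coe_card, List.length_singleton]
    omega
  · -- i moved by g
    obtain ⟨c, hc, hci, hcy, hcn⟩ : ∃ c : Perm (Fin n), c.IsCycle ∧ c i = g i ∧
        (∀ y, g.SameCycle i y → c y = g y) ∧ (∀ y, ¬ g.SameCycle i y → c y = y) :=
      ⟨g.cycleOf i, isCycle_cycleOf g hgi, cycleOf_apply_self g i,
        fun y h => h.cycleOf_apply, fun y h => by rw [cycleOf_apply, if_neg h]⟩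
    have hcj : c j = j := by
      by_cases h : g.SameCycle i j
      · rw [hcy _ h, hj]
      · exact hcn _ h
    obtain ⟨d, hgd⟩ : ∃ d, g = c * d := ⟨c⁻¹ * g, (mul_inv_cancel_left c g).symm⟩
    have hdeq : ∀ y, d y = c⁻¹ (g y) := by
      intro y
      rw [hgd, Perm.mul_apply]; exact (c.symm_apply_apply _).symm
    have hdy1 : ∀ y, g.SameCycle i y → d y = y := by
      intro y h
      rw [hdeq, ← hcy y h]
      exact c.symm_apply_apply y
    have hdy2 : ∀ y, ¬ g.SameCycle i y → d y = g y := by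
      intro y h
      have h' : ¬ g.SameCycle i (g y) := fun hh => h (sameCycle_apply_right.mp hh)
      rw [hdeq]
      conv_lhs => rw [← hcn _ h']
      exact c.symm_apply_apply _
    have hdisj : c.Disjoint d := by
      intro y
      by_cases h : g.SameCycle i y
      · right; exact hdy1 y h
      · left; exact hcn y h
    have hdi : d i = i := hdy1 i (SameCycle.refl _ _)
    have hdj : d j = j := by
      by_cases h : g.SameCycle i j
      · exact hdy1 _ h
      · rw [hdy2 _ h, hj]
    have hτd : τ.Disjoint d := by
      intro y
      by_cases h1 : y = i
      · right; rw [h1, hdi]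
      · by_cases h2 : y = j
        · right; rw [h2, hdj]
        · left; exact Equiv.swap_apply_of_ne_of_ne h1 h2
    have hcomm : τ * d = d * τ := hτd.commute.eq
    have hmul : g * τ = (c * τ) * d :=
      calc g * τ = (c * d) * τ := by rw [← hgd]
        _ = c * (d * τ) := by rw [mul_assoc]
        _ = c * (τ * d) := by rw [← hcomm]
        _ = (c * τ) * d := by rw [mul_assoc]
    have hcine : c i ≠ i := by rw [hci]; exact hgi
    obtain ⟨hc'cyc, hc'supp⟩ := isCycle_mul_swap hc hij hcine hcj
    have hdisj' : (c * τ).Disjoint d := by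
      intro y
      by_cases hdy : d y = y
      · right; exact hdy
      · left
        have h1 : ¬ g.SameCycle i y := fun h => hdy (hdy1 y h)
        have hyi : y ≠ i := fun h => hdy (h ▸ hdi)
        have hyj : y ≠ j := fun h => hdy (h ▸ hdj)
        rw [Perm.mul_apply]
        rw [show τ y = y from Equiv.swap_apply_of_ne_of_ne hyi hyj, hcn y h1]
    have e1 : (g * τ).cycleType = (c * τ).cycleType + d.cycleType := by
      rw [hmul]; exact hdisj'.cycleType_mul
    have e2 : g.cycleType = c.cycleType + d.cycleType := hgd ▸ hdisj.cycleType_mul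
    have s1 : (g * τ).support = insert j g.support := by
      rw [hmul, hdisj'.support_mul, hc'supp, hgd, hdisj.support_mul,
        Finset.insert_union]
    have scard : (g * τ).support.card = g.support.card + 1 := by
      rw [s1, Finset.card_insert_of_notMem hjs]
    have h1n := suppcard (g * τ)
    rw [scard] at h1n
    unfold cycA
    rw [fixcard, fixcard, e1, e2, scard, Multiset.card_add, Multiset.card_add,
      hc'cyc.cycleType, hc.cycleType]
    simp only [Multiset.card_singleton]
    omega

section T3
variable {n : ℕ}

/-- the `k`-th swap determined by a subexcedant function `b` -/
def sw (b : ∀ j : Fin n, Fin (j.1 + 1)) (k : ℕ) : Equiv.Perm (Fin n) :=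
  if h : k < n then
    if (b ⟨k, h⟩ : ℕ) = 0 then 1
    else Equiv.swap ⟨k - (b ⟨k, h⟩ : ℕ), Nat.lt_of_le_of_lt (Nat.sub_le _ _) h⟩ ⟨k, h⟩
  else 1

/-- partial products -/
def Pp (b : ∀ j : Fin n, Fin (j.1 + 1)) : ℕ → Equiv.Perm (Fin n)
  | 0 => 1
  | (k+1) => Pp b k * sw b k

/-- partial factorization lists -/
def Lb (b : ∀ j : Fin n, Fin (j.1 + 1)) : ℕ → List (Fin n × Fin n)
  | 0 => []
  | (k+1) => Lb b k ++ (if h : k < n then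
      (if (b ⟨k, h⟩ : ℕ) = 0 then []
       else [(⟨k - (b ⟨k, h⟩ : ℕ), Nat.lt_of_le_of_lt (Nat.sub_le _ _) h⟩, ⟨k, h⟩)])
      else [])

variable (b b' : ∀ j : Fin n, Fin (j.1 + 1))

lemma Lb_bounds : ∀ k, ∀ p ∈ Lb b k, (p.1 : ℕ) < (p.2 : ℕ) ∧ (p.2 : ℕ) < k := by
  intro k
  induction k with
  | zero => intro p hp; simp [Lb] at hp
  | succ k ih =>
    intro p hp
    rw [Lb, List.mem_append] at hp
    rcases hp with hp | hp
    · obtain ⟨h1, h2⟩ := ih p hp; exact ⟨h1, by omega⟩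
    · split at hp
      · rename_i h
        split at hp
        · simp at hp
        · rename_i hb
          simp only [List.mem_singleton] at hp
          subst hp
          have hble := (b ⟨k, h⟩).isLt
          simp only [Fin.val_mk] at hble ⊢
          constructor <;> omega
      · simp at hp

lemma Lb_chain : ∀ k, List.Chain' (· < ·) ((Lb b k).map Prod.snd) := by
  intro k
  induction k with
  | zero => simp [Lb]; exact List.isChain_nil
  | succ k ih =>
    rw [Lb, List.map_append, List.Chain', List.isChain_append]
    refine ⟨ih, ?_, ?_⟩
    · split
      · split <;> simp
      · simp
    · intro x hx y hy
      have hxm : x ∈ (Lb b k).map Prod.snd := List.mem_of_mem_getLast? hx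
      obtain ⟨p, hp, rfl⟩ := List.mem_map.mp hxm
      have hb1 := (Lb_bounds b k p hp).2
      split at hy
      · rename_i h
        split at hy
        · simp at hy
        · simp only [List.map_cons, List.map_nil, List.head?] at hy
          rw [Option.mem_def, Option.some_inj] at hy
          subst hy
          exact Fin.mk_lt_mk.mpr hb1 |>.trans_le (le_refl _) |>.trans_le (le_refl _)
      · simp at hy

lemma Lb_prod : ∀ k, ((Lb b k).map fun p => Equiv.swap p.1 p.2).prod = Pp b k := by
  intro k
  induction k with
  | zero => simp [Lb, Pp]
  | succ k ih =>
    rw [Lb, Pp, List.map_append, List.prod_append, ih, sw]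
    congr 1
    split
    · split <;> simp
    · simp

lemma Pp_fix : ∀ k, ∀ x : Fin n, k ≤ (x : ℕ) → Pp b k x = x := by
  intro k
  induction k with
  | zero => intro x _; rfl
  | succ k ih =>
    intro x hx
    rw [Pp, Equiv.Perm.mul_apply]
    have hsw : sw b k x = x := by
      rw [sw]
      split
      · split
        · rfl
        · rename_i h hb
          refine Equiv.swap_apply_of_ne_of_ne ?_ ?_ <;>
          · intro hc
            rw [Fin.ext_iff] at hc
            simp only at hc
            omega
      · rfl
    rw [hsw]
    exact ih x (by omega)

end T3

section T3b
variable {n : ℕ} (b b' : ∀ j : Fin n, Fin (j.1 + 1))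

lemma cycA_one : cycA (1 : Equiv.Perm (Fin n)) = n := by
  unfold cycA
  rw [cycleType_one]
  simp

lemma Lb_cycA : ∀ k, cycA (Pp b k) + (Lb b k).length = n := by
  intro k
  induction k with
  | zero => simpa [Lb, Pp] using cycA_one
  | succ k ih =>
    rw [Lb, Pp, List.length_append, sw]
    split
    · rename_i h
      split
      · simpa using ih
      · rename_i hb
        have hble := (b ⟨k, h⟩).isLt
        simp only [Fin.val_mk] at hble
        have hij : (⟨k - (b ⟨k, h⟩ : ℕ), Nat.lt_of_le_of_lt (Nat.sub_le _ _) h⟩ : Fin n)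
            ≠ ⟨k, h⟩ := by
          intro hc; rw [Fin.ext_iff] at hc; simp only [Fin.val_mk] at hc; omega
        have hfix : Pp b k ⟨k, h⟩ = ⟨k, h⟩ := Pp_fix b k _ (le_refl _)
        have := cycA_mul_swap (g := Pp b k) hij hfix
        simp only [List.length_cons, List.length_nil]
        omega
    · simpa using ih

lemma Lb_sum : ∀ k, ((Lb b k).map fun p => (p.2 : ℕ) - (p.1 : ℕ)).sum
    = ∑ j : Fin n, if (j : ℕ) < k then (b j : ℕ) else 0 := by
  intro k
  induction k with
  | zero => simp [Lb]
  | succ k ih =>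
    rw [Lb, List.map_append, List.sum_append, ih]
    by_cases h : k < n
    · rw [dif_pos h]
      have hble := (b ⟨k, h⟩).isLt
      simp only [Fin.val_mk] at hble
      have hsplit : ∀ j : Fin n, (if (j : ℕ) < k + 1 then (b j : ℕ) else 0)
          = (if (j : ℕ) < k then (b j : ℕ) else 0) + (if j = ⟨k, h⟩ then (b j : ℕ) else 0) := by
        intro j
        by_cases hj : j = ⟨k, h⟩
        · subst hj; simp
        · have : (j : ℕ) ≠ k := fun hc => hj (Fin.ext hc)
          by_cases h2 : (j : ℕ) < k <;> simp [hj, h2] <;> omega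
      rw [Finset.sum_congr rfl (fun j _ => hsplit j), Finset.sum_add_distrib,
        Finset.sum_ite_eq' Finset.univ (⟨k, h⟩ : Fin n) (fun j => (b j : ℕ))]
      simp only [Finset.mem_univ, if_true]
      split
      · rename_i hb; simp [hb]
      · simp only [List.map_cons, List.map_nil, List.sum_cons, List.sum_nil, Fin.val_mk]
        omega
    · rw [dif_neg h]
      have : ∀ j : Fin n, ((j : ℕ) < k + 1) = ((j : ℕ) < k) := by
        intro j
        have := j.isLt
        simp only [eq_iff_iff]
        omega
      simp only [this]
      simp

lemma Lb_length : ∀ k, k ≤ n →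
    (Lb b k).length + (Finset.univ.filter fun j : Fin n => (j : ℕ) < k ∧ (b j : ℕ) = 0).card
      = k := by
  intro k
  induction k with
  | zero => simp [Lb]
  | succ k ih =>
    intro hk
    have h : k < n := hk
    have ihh := ih (by omega)
    rw [Lb, List.length_append, dif_pos h]
    have hfilter : (Finset.univ.filter fun j : Fin n => (j : ℕ) < k + 1 ∧ (b j : ℕ) = 0)
        = (Finset.univ.filter fun j : Fin n => (j : ℕ) < k ∧ (b j : ℕ) = 0)
          ∪ (if (b ⟨k, h⟩ : ℕ) = 0 then {⟨k, h⟩} else ∅) := by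
      ext j
      simp only [Finset.mem_filter, Finset.mem_univ, true_and, Finset.mem_union]
      constructor
      · rintro ⟨hj1, hj2⟩
        by_cases hjk : (j : ℕ) = k
        · right
          have : j = ⟨k, h⟩ := Fin.ext hjk
          subst this
          simp [hj2]
        · left; exact ⟨by omega, hj2⟩
      · intro hj
        rcases hj with ⟨hj1, hj2⟩ | hj
        · exact ⟨by omega, hj2⟩
        · split at hj
          · rename_i hb
            simp only [Finset.mem_singleton] at hj
            subst hj
            exact ⟨by simp, by simpa using hb⟩
          · simp at hj
    rw [hfilter, Finset.card_union_of_disjoint]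
    · split
      · rename_i hb
        simp only [List.length_nil, Finset.card_singleton]
        omega
      · simp only [List.length_cons, List.length_nil, Finset.card_empty]
        omega
    · split
      · rename_i hb
        simp only [Finset.disjoint_singleton_right, Finset.mem_filter]
        rintro ⟨-, h1, -⟩
        simp at h1
      · simp

end T3b

section T3c
variable {n : ℕ}

lemma Pp_top (b : ∀ j : Fin n, Fin (j.1 + 1)) (k : ℕ) (h : k < n) :
    Pp b (k+1) ⟨k - (b ⟨k, h⟩ : ℕ), Nat.lt_of_le_of_lt (Nat.sub_le _ _) h⟩ = ⟨k, h⟩ := by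
  rw [Pp, Equiv.Perm.mul_apply, sw, dif_pos h]
  split
  · rename_i hb
    have heq : (⟨k - (b ⟨k, h⟩ : ℕ), Nat.lt_of_le_of_lt (Nat.sub_le _ _) h⟩ : Fin n)
        = ⟨k, h⟩ := Fin.ext (by simp [hb])
    rw [Equiv.Perm.one_apply, heq]
    exact Pp_fix b k _ (le_refl _)
  · rw [Equiv.swap_apply_left]
    exact Pp_fix b k _ (le_refl _)

lemma Pp_step (b b' : ∀ j : Fin n, Fin (j.1 + 1)) (k : ℕ) (h : k < n)
    (heq : Pp b (k+1) = Pp b' (k+1)) :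
    b ⟨k, h⟩ = b' ⟨k, h⟩ ∧ Pp b k = Pp b' k := by
  have h1 := Pp_top b k h
  have h2 := Pp_top b' k h
  rw [← heq] at h2
  have h3 := (Pp b (k+1)).injective (h1.trans h2.symm)
  have hble := (b ⟨k, h⟩).isLt
  have hble' := (b' ⟨k, h⟩).isLt
  simp only [Fin.val_mk] at hble hble'
  rw [Fin.ext_iff] at h3
  simp only [Fin.val_mk] at h3
  have hb : b ⟨k, h⟩ = b' ⟨k, h⟩ := by
    rw [Fin.ext_iff]; omega
  refine ⟨hb, ?_⟩
  have hsw : sw b k = sw b' k := by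
    rw [sw, sw, dif_pos h, dif_pos h]
    exact congrArg (fun v : Fin (k+1) => if (v : ℕ) = 0 then 1
      else Equiv.swap (⟨k - (v : ℕ), Nat.lt_of_le_of_lt (Nat.sub_le _ _) h⟩ : Fin n) ⟨k, h⟩) hb
  rw [Pp, Pp, hsw] at heq
  exact mul_right_cancel heq

lemma Pp_inj (b b' : ∀ j : Fin n, Fin (j.1 + 1)) (heq : Pp b n = Pp b' n) : b = b' := by
  have main : ∀ d, d ≤ n → (∀ j : Fin n, n - d ≤ (j : ℕ) → b j = b' j)
      ∧ Pp b (n - d) = Pp b' (n - d) := by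
    intro d
    induction d with
    | zero =>
      intro _
      exact ⟨fun j hj => absurd j.isLt (by omega), by simpa using heq⟩
    | succ d ih =>
      intro hd
      obtain ⟨ih1, ih2⟩ := ih (by omega)
      have hk : n - d = (n - (d+1)) + 1 := by omega
      have hlt : n - (d+1) < n := by omega
      rw [hk] at ih2
      obtain ⟨hb, hP⟩ := Pp_step b b' _ hlt ih2
      refine ⟨fun j hj => ?_, hP⟩
      by_cases hj2 : n - d ≤ (j : ℕ)
      · exact ih1 j hj2
      · have hje : j = ⟨n - (d+1), hlt⟩ := Fin.ext (by simp only [Fin.val_mk]; omega)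
        subst hje
        exact hb
  funext j
  exact (main n (le_refl n)).1 j (by omega)

lemma Pp_sortFact (b : ∀ j : Fin n, Fin (j.1 + 1)) : SortFactA (Pp b n) (Lb b n) :=
  ⟨fun p hp => Fin.lt_def.mpr (Lb_bounds b n p hp).1, Lb_chain b n, Lb_prod b n⟩

lemma card_box : Fintype.card (∀ j : Fin n, Fin (j.1 + 1)) = Fintype.card (Equiv.Perm (Fin n)) := by
  rw [Fintype.card_pi, Fintype.card_perm, Fintype.card_fin]
  simp only [Fintype.card_fin]
  induction n with
  | zero => simp
  | succ m ih =>
    rw [Fin.prod_univ_castSucc]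
    simp only [Fin.coe_castSucc, Fin.val_last]
    rw [ih, Nat.factorial_succ, Nat.mul_comm]

lemma rhs_eq {R : Type} [CommRing R] (q t : R) (sor : Equiv.Perm (Fin n) → ℕ)
    (hsor : ∀ w L, SortFactA w L → sor w = (L.map fun p => (p.2 : ℕ) - (p.1 : ℕ)).sum) :
    ∑ w : Equiv.Perm (Fin n), q ^ sor w * t ^ cycA w
      = ∑ bb : (∀ j : Fin n, Fin (j.1 + 1)),
          q ^ (∑ j : Fin n, (bb j : ℕ))
            * t ^ (Finset.univ.filter fun j : Fin n => (bb j : ℕ) = 0).card := by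
  have hbij : Function.Bijective (fun bb : (∀ j : Fin n, Fin (j.1 + 1)) => Pp bb n) :=
    (Fintype.bijective_iff_injective_and_card _).mpr ⟨fun bb bb' h => Pp_inj bb bb' h, card_box⟩
  refine (Fintype.sum_bijective _ hbij _ _ ?_).symm
  intro bb
  have hsor' : sor (Pp bb n) = ∑ j : Fin n, (bb j : ℕ) := by
    rw [hsor _ _ (Pp_sortFact bb), Lb_sum]
    exact Finset.sum_congr rfl fun j _ => by simp [j.isLt]
  have hcyc : cycA (Pp bb n) = (Finset.univ.filter fun j : Fin n => (bb j : ℕ) = 0).card := by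
    have h1 := Lb_cycA bb n
    have h2 := Lb_length bb n (le_refl n)
    have h3 : (Finset.univ.filter fun j : Fin n => (j : ℕ) < n ∧ (bb j : ℕ) = 0)
        = (Finset.univ.filter fun j : Fin n => (bb j : ℕ) = 0) :=
      Finset.filter_congr fun j _ => by simp [j.isLt]
    rw [h3] at h2
    have h4 : (Finset.univ.filter fun j : Fin n => (bb j : ℕ) = 0).card ≤ n := by
      simpa using Finset.card_le_card
        (Finset.subset_univ (Finset.univ.filter fun j : Fin n => (bb j : ℕ) = 0))
    omega
  rw [hsor', hcyc]

end T3c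

section T2
variable {n : ℕ}

def cdePos (w : Equiv.Perm (Fin n)) (i : Fin n) : ℕ :=
  (Finset.univ.filter fun k : Fin n => i < k ∧ w k < w i).card

lemma invA_eq_sum (w : Equiv.Perm (Fin n)) : invA w = ∑ i : Fin n, cdePos w i := by
  unfold invA
  rw [Finset.card_eq_sum_card_fiberwise
    (f := Prod.fst) (t := Finset.univ) (fun x _ => Finset.mem_univ _)]
  refine Finset.sum_congr rfl fun i _ => ?_
  refine Finset.card_bij' (fun p _ => p.2) (fun k _ => (i, k)) ?_ ?_ ?_ ?_
  · intro p hp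
    simp only [Finset.mem_filter, Finset.mem_univ, true_and] at hp ⊢
    obtain ⟨⟨h1, h2⟩, h3⟩ := hp
    subst h3
    exact ⟨h1, h2⟩
  · intro k hk
    simp only [Finset.mem_filter, Finset.mem_univ, true_and] at hk ⊢
    exact ⟨⟨hk.1, hk.2⟩, trivial⟩
  · intro p hp
    simp only [Finset.mem_filter] at hp
    obtain ⟨a, c⟩ := p
    obtain ⟨-, h3⟩ := hp
    simp only at h3
    subst h3
    rfl
  · intro k _
    rfl

lemma mA_eq (w : Equiv.Perm (Fin n)) :
    mA w = (Finset.univ.filter fun i => cdePos w i = 0).card := by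
  unfold mA
  congr 1
  apply Finset.filter_congr
  intro i _
  unfold cdePos
  rw [Finset.card_eq_zero, Finset.filter_eq_empty_iff]
  constructor
  · intro h k _
    rintro ⟨h1, h2⟩
    exact absurd h2 (not_lt.mpr (le_of_lt (h k h1)))
  · intro h k hk
    have hnk := h (Finset.mem_univ k)
    rcases lt_or_ge (w i) (w k) with h' | h'
    · exact h'
    · exfalso
      apply hnk
      refine ⟨hk, lt_of_le_of_ne h' fun he => ?_⟩
      exact absurd (w.injective he) (ne_of_gt hk)

lemma cdePos_le (w : Equiv.Perm (Fin n)) (i : Fin n) : cdePos w i ≤ n - 1 - (i : ℕ) := by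
  unfold cdePos
  rw [← Fin.card_Ioi i]
  apply Finset.card_le_card
  intro k hk
  simp only [Finset.mem_filter, Finset.mem_univ, true_and] at hk
  exact Finset.mem_Ioi.mpr hk.1

def cde (w : Equiv.Perm (Fin n)) : ∀ j : Fin n, Fin (j.1 + 1) :=
  fun j => ⟨cdePos w j.rev, by
    have h1 := cdePos_le w j.rev
    have h2 : (j.rev : ℕ) = n - (j : ℕ) - 1 := Fin.val_rev j
    have h3 := j.isLt
    omega⟩

lemma cde_sum (w : Equiv.Perm (Fin n)) :
    (∑ j : Fin n, ((cde w j : ℕ))) = ∑ i : Fin n, cdePos w i := by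
  exact Fintype.sum_bijective Fin.rev Fin.rev_bijective _ _ fun j => rfl

lemma cde_zeros (w : Equiv.Perm (Fin n)) :
    (Finset.univ.filter fun j : Fin n => (cde w j : ℕ) = 0).card
      = (Finset.univ.filter fun i : Fin n => cdePos w i = 0).card := by
  refine Finset.card_bij' (fun j _ => j.rev) (fun i _ => i.rev) ?_ ?_ ?_ ?_
  · intro j hj
    simp only [Finset.mem_filter, Finset.mem_univ, true_and] at hj ⊢
    exact hj
  · intro i hi
    simp only [Finset.mem_filter, Finset.mem_univ, true_and] at hi ⊢
    show cdePos w i.rev.rev = 0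
    rwa [Fin.rev_rev]
  · intro j _; exact Fin.rev_rev j
  · intro i _; exact Fin.rev_rev i

lemma count_lt (w : Equiv.Perm (Fin n)) (v : Fin n) :
    (Finset.univ.filter fun k => w k < v).card = (v : ℕ) := by
  rw [← Fin.card_Iio v]
  refine Finset.card_bij' (fun k _ => w k) (fun u _ => w⁻¹ u) ?_ ?_ ?_ ?_
  · intro k hk
    simp only [Finset.mem_filter, Finset.mem_univ, true_and] at hk
    exact Finset.mem_Iio.mpr hk
  · intro u hu
    simp only [Finset.mem_filter, Finset.mem_univ, true_and]
    rw [show w (w⁻¹ u) = u from w.apply_symm_apply u]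
    exact Finset.mem_Iio.mp hu
  · intro k _
    exact w.symm_apply_apply k
  · intro u _
    exact w.apply_symm_apply u

lemma cdePos_inj {w w' : Equiv.Perm (Fin n)} (h : ∀ i, cdePos w i = cdePos w' i) :
    w = w' := by
  have key : ∀ m : ℕ, ∀ i : Fin n, (i : ℕ) = m → w i = w' i := by
    intro m
    induction m using Nat.strong_induction_on with
    | _ m ih =>
      intro i him
      have hagree : ∀ k : Fin n, k < i → w k = w' k := by
        intro k hk
        exact ih (k : ℕ) (by rw [← him]; exact hk) k rfl
      have split : ∀ u : Equiv.Perm (Fin n),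
          (u i : ℕ) = (Finset.univ.filter fun k => k < i ∧ u k < u i).card + cdePos u i := by
        intro u
        have h1 := count_lt u (u i)
        have h2 : (Finset.univ.filter fun k => u k < u i)
            = (Finset.univ.filter fun k => k < i ∧ u k < u i)
              ∪ (Finset.univ.filter fun k => i < k ∧ u k < u i) := by
          ext k
          simp only [Finset.mem_filter, Finset.mem_univ, true_and, Finset.mem_union]
          constructor
          · intro hk
            rcases lt_trichotomy k i with hki | hki | hki
            · exact Or.inl ⟨hki, hk⟩
            · subst hki; exact absurd hk (lt_irrefl _)
            · exact Or.inr ⟨hki, hk⟩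
          · rintro (⟨-, hk⟩ | ⟨-, hk⟩) <;> exact hk
        have hdisj : Disjoint (Finset.univ.filter fun k => k < i ∧ u k < u i)
            (Finset.univ.filter fun k => i < k ∧ u k < u i) := by
          rw [Finset.disjoint_left]
          intro k hk1 hk2
          simp only [Finset.mem_filter, Finset.mem_univ, true_and] at hk1 hk2
          exact absurd (hk1.1.trans hk2.1) (lt_irrefl _)
        rw [← h1, h2, Finset.card_union_of_disjoint hdisj]
        rfl
      have e1 := split w
      have e2 := split w'
      have hfe : (Finset.univ.filter fun k => k < i ∧ w' k < w' i)
          = (Finset.univ.filter fun k => k < i ∧ w k < w' i) := by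
        apply Finset.filter_congr
        intro k _
        constructor
        · rintro ⟨hk, hv⟩; exact ⟨hk, by rwa [hagree k hk]⟩
        · rintro ⟨hk, hv⟩; exact ⟨hk, by rwa [← hagree k hk]⟩
      rw [hfe, ← h i] at e2
      -- main monotonicity contradiction
      have main : ∀ v v' : Fin n, v < v' →
          ((v : ℕ) = (Finset.univ.filter fun k => k < i ∧ w k < v).card + cdePos w i) →
          ((v' : ℕ) = (Finset.univ.filter fun k => k < i ∧ w k < v').card + cdePos w i) →
          (∀ k, k < i → w k ≠ v) → False := by
        intro v v' hvv ev ev' hne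
        have hsplit2 : (Finset.univ.filter fun k => k < i ∧ w k < v')
            = (Finset.univ.filter fun k => k < i ∧ w k < v)
              ∪ (Finset.univ.filter fun k => (k < i ∧ v ≤ w k) ∧ w k < v') := by
          ext k
          simp only [Finset.mem_filter, Finset.mem_univ, true_and, Finset.mem_union]
          constructor
          · rintro ⟨hk, hv⟩
            rcases lt_or_ge (w k) v with h' | h'
            · exact Or.inl ⟨hk, h'⟩
            · exact Or.inr ⟨⟨hk, h'⟩, hv⟩
          · rintro (⟨hk, hv⟩ | ⟨⟨hk, hv1⟩, hv2⟩)
            · exact ⟨hk, hv.trans hvv⟩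
            · exact ⟨hk, hv2⟩
        have hdisj2 : Disjoint (Finset.univ.filter fun k => k < i ∧ w k < v)
            (Finset.univ.filter fun k => (k < i ∧ v ≤ w k) ∧ w k < v') := by
          rw [Finset.disjoint_left]
          intro k hk1 hk2
          simp only [Finset.mem_filter, Finset.mem_univ, true_and] at hk1 hk2
          exact absurd hk1.2 (not_lt.mpr hk2.1.2)
        have hcard : (Finset.univ.filter fun k => k < i ∧ w k < v').card
            = (Finset.univ.filter fun k => k < i ∧ w k < v).card
              + (Finset.univ.filter fun k => (k < i ∧ v ≤ w k) ∧ w k < v').card := by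
          rw [hsplit2, Finset.card_union_of_disjoint hdisj2]
        have hmid : (Finset.univ.filter fun k => (k < i ∧ v ≤ w k) ∧ w k < v').card
            ≤ ((v' : ℕ) - (v : ℕ)) - 1 := by
          rw [← Nat.card_Ioo]
          apply Finset.card_le_card_of_injOn (fun k => (w k : ℕ))
          · intro k hk
            simp only [Finset.mem_coe, Finset.mem_filter, Finset.mem_univ, true_and] at hk
            obtain ⟨⟨hk1, hk2⟩, hk3⟩ := hk
            rw [Finset.mem_coe, Finset.mem_Ioo]
            have hne' : w k ≠ v := hne k hk1
            constructor
            · have : v < w k := lt_of_le_of_ne hk2 (Ne.symm hne')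
              exact this
            · exact hk3
          · intro k1 _ k2 _ he
            exact w.injective (Fin.ext he)
        have hlt : (v : ℕ) < (v' : ℕ) := hvv
        omega
      rcases lt_trichotomy (w i) (w' i) with hlt | heq | hlt
      · exact absurd (main (w i) (w' i) hlt e1 e2
          fun k hk he => absurd (w.injective he) (ne_of_lt hk)) not_false
      · exact heq
      · exact absurd (main (w' i) (w i) hlt e2 e1
          fun k hk he => absurd (w'.injective ((hagree k hk).symm.trans he))
            (ne_of_lt hk)) not_false
  exact Equiv.ext fun i => key (i : ℕ) i rfl

lemma lhs_eq {R : Type} [CommRing R] (q t : R) :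
    ∑ w : Equiv.Perm (Fin n), q ^ invA w * t ^ mA w
      = ∑ bb : (∀ j : Fin n, Fin (j.1 + 1)),
          q ^ (∑ j : Fin n, (bb j : ℕ))
            * t ^ (Finset.univ.filter fun j : Fin n => (bb j : ℕ) = 0).card := by
  have hinj : Function.Injective (cde (n := n)) := by
    intro w w' hww
    apply cdePos_inj
    intro i
    have h1 := congrFun hww i.rev
    have h2 : cdePos w i.rev.rev = cdePos w' i.rev.rev := by
      simpa [cde, Fin.ext_iff] using h1
    rwa [Fin.rev_rev] at h2
  have hbij : Function.Bijective (cde (n := n)) :=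
    (Fintype.bijective_iff_injective_and_card _).mpr ⟨hinj, card_box.symm⟩
  refine Fintype.sum_bijective cde hbij _ _ ?_
  intro w
  rw [invA_eq_sum, mA_eq, ← cde_sum, ← cde_zeros]

end T2


end Aux

open Finset in
/-- The pairs `(inv, m)` and `(sor, cyc)` are equidistributed over `S_n`, where `sor` is
the sorting index: `sor w = ∑_s (j_s - i_s)` for the unique factorization
`w = t_{i₁ j₁}⋯t_{i_k j_k}` with `i_s < j_s`, `j₁ < ⋯ < j_k`. -/
theorem inv_m_sor_cyc_equidistributed {R : Type} [CommRing R] (n : ℕ) (q t : R)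
    (sor : Equiv.Perm (Fin n) → ℕ)
    (hsor : ∀ w L, SortFactA w L → sor w = (L.map fun p => (p.2 : ℕ) - (p.1 : ℕ)).sum) :
    ∑ w : Equiv.Perm (Fin n), q ^ invA w * t ^ mA w =
      ∑ w : Equiv.Perm (Fin n), q ^ sor w * t ^ cycA w := by
  rw [lhs_eq, rhs_eq q t sor hsor]
end

section
/- The sorting index is Mahonian: ∑_{w ∈ S_n} q^{sor(w)} = (1+q)(1+q+q^2)⋯(1+q+⋯+q^{n-1}) = ∑_{w ∈ S_n} q^{inv(w)}. -/
open Finset Equiv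

variable {n : ℕ}

/-- The cycle sending `v ↦ m`, `x ↦ x-1` for `v < x ≤ m`, fixing everything else. -/
def cyc (v m : Fin n) (hvm : v ≤ m) : Equiv.Perm (Fin n) where
  toFun x := if x = v then m else if (v:ℕ) < x ∧ (x:ℕ) ≤ m then ⟨(x:ℕ) - 1, by omega⟩ else x
  invFun x := if x = m then v
    else if (v:ℕ) ≤ x ∧ (x:ℕ) < m then
      ⟨min ((x:ℕ) + 1) (m:ℕ), lt_of_le_of_lt (min_le_right _ _) m.isLt⟩ else x
  left_inv := by
    intro x
    have hvm' : (v:ℕ) ≤ m := hvm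
    dsimp only; split_ifs <;>
      first
        | omega
        | (simp only [Fin.mk.injEq, Fin.ext_iff, Fin.val_mk, Fin.lt_def, Fin.le_def,
            not_and, not_lt, not_le, Ne] at *; omega)
  right_inv := by
    intro x
    have hvm' : (v:ℕ) ≤ m := hvm
    dsimp only; split_ifs <;>
      first
        | omega
        | (simp only [Fin.mk.injEq, Fin.ext_iff, Fin.val_mk, Fin.lt_def, Fin.le_def,
            not_and, not_lt, not_le, Ne] at *; omega)

lemma cyc_self (v m : Fin n) (hvm : v ≤ m) : cyc v m hvm v = m := by simp [cyc]

lemma cyc_of_gt {v m x : Fin n} (hvm : v ≤ m) (h : m < x) : cyc v m hvm x = x := by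
  have hvm' : (v:ℕ) ≤ m := hvm
  have h' : (m:ℕ) < x := h
  simp only [cyc, Equiv.coe_fn_mk]
  split_ifs <;>
    first
      | rfl
      | omega
      | (simp only [Fin.mk.injEq, Fin.ext_iff, Fin.val_mk, Fin.lt_def, Fin.le_def,
          not_and, not_lt, not_le, Ne] at *; omega)

lemma cyc_le {v m x : Fin n} (hvm : v ≤ m) (h : (x:ℕ) ≤ m) : ((cyc v m hvm x : Fin n) : ℕ) ≤ m := by
  have hvm' : (v:ℕ) ≤ m := hvm
  simp only [cyc, Equiv.coe_fn_mk]
  split_ifs <;>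
    first
      | omega
      | (simp only [Fin.mk.injEq, Fin.ext_iff, Fin.val_mk, Fin.lt_def, Fin.le_def,
          not_and, not_lt, not_le, Ne] at *; omega)

lemma cyc_mono {v m x y : Fin n} (hvm : v ≤ m) (hx : x ≠ v) (hy : y ≠ v) :
    (cyc v m hvm x < cyc v m hvm y ↔ x < y) := by
  have hvm' : (v:ℕ) ≤ m := hvm
  have hx' : (x:ℕ) ≠ v := fun h => hx (Fin.ext h)
  have hy' : (y:ℕ) ≠ v := fun h => hy (Fin.ext h)
  simp only [cyc, Equiv.coe_fn_mk, Fin.lt_def]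
  split_ifs <;>
    first
      | omega
      | (simp only [Fin.mk.injEq, Fin.ext_iff, Fin.val_mk, Fin.lt_def, Fin.le_def,
          not_and, not_lt, not_le, Ne] at *; omega)


/-- Permutations fixing all indices `≥ m`. -/
def Fm (n m : ℕ) : Finset (Equiv.Perm (Fin n)) :=
  Finset.univ.filter fun w => ∀ k : Fin n, m ≤ (k : ℕ) → w k = k

lemma mem_Fm {m : ℕ} {w : Equiv.Perm (Fin n)} :
    w ∈ Fm n m ↔ ∀ k : Fin n, m ≤ (k : ℕ) → w k = k := by
  simp [Fm]

lemma Fm_val {m : ℕ} {w : Equiv.Perm (Fin n)} (hw : w ∈ Fm n m) {a : Fin n}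
    (ha : (a : ℕ) < m) : ((w a : Fin n) : ℕ) < m := by
  by_contra h
  have := (mem_Fm.1 hw) (w a) (le_of_not_gt h)
  have := w.injective this
  omega

lemma Fm_zero {w : Equiv.Perm (Fin n)} (hw : w ∈ Fm n 0) : w = 1 := by
  exact Equiv.ext fun k => ((mem_Fm.1 hw) k (Nat.zero_le _)).trans rfl

lemma Fm_univ : Fm n n = Finset.univ := by
  ext w
  simp only [Finset.mem_univ, iff_true, mem_Fm]
  intro k hk
  exact absurd k.isLt (by omega)

/-- Existence of the sorting factorization, with control on the largest index. -/
lemma exists_fact : ∀ (m : ℕ) (w : Equiv.Perm (Fin n)), w ∈ Fm n m →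
    ∃ L, SortFactA w L ∧ ∀ p ∈ L, ((p : Fin n × Fin n).2 : ℕ) < m := by
  intro m
  induction m with
  | zero =>
    intro w hw
    refine ⟨[], ⟨by simp, List.isChain_nil, ?_⟩, by simp⟩
    simp [Fm_zero hw]
  | succ m ih =>
    intro w hw
    by_cases hmn : m < n
    · set M : Fin n := ⟨m, hmn⟩ with hM
      have hMval : (M : ℕ) = m := rfl
      by_cases hwM : w M = M
      · have hw' : w ∈ Fm n m := by
          rw [mem_Fm]
          intro k hk
          rcases eq_or_lt_of_le hk with h | h
          · have : k = M := Fin.ext h.symm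
            rw [this]; exact hwM
          · exact (mem_Fm.1 hw) k h
        obtain ⟨L, hL, hb⟩ := ih w hw'
        exact ⟨L, hL, fun p hp => Nat.lt_succ_of_lt (hb p hp)⟩
      · set i : Fin n := w⁻¹ M with hi
        have hwi : w i = M := Equiv.apply_symm_apply w M
        have hiM : i < M := by
          rcases lt_trichotomy i M with h | h | h
          · exact h
          · exact absurd (by rw [← h] at hwi ⊢; exact hwi) hwM
          · have hMi : m < (i:ℕ) := by simpa [Fin.lt_def, hMval] using h
            have : w i = i := (mem_Fm.1 hw) i (by omega)
            rw [hwi] at this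
            exact absurd this.symm (ne_of_gt h)
        set w' := w * Equiv.swap i M with hw'def
        have hw' : w' ∈ Fm n m := by
          rw [mem_Fm]
          intro k hk
          rcases eq_or_lt_of_le hk with h | h
          · have hk' : k = M := Fin.ext h.symm
            rw [hk', hw'def]
            simp [Equiv.swap_apply_right, hwi]
          · have hki : k ≠ i := by
              intro h'
              have : (i:ℕ) < m := by
                have := hiM
                simp only [Fin.lt_def] at this
                omega
              rw [h'] at h; omega
            have hkM : k ≠ M := by
              intro h'
              rw [h'] at h
              simp only [hM] at h
              omega
            rw [hw'def]
            simp only [Equiv.Perm.mul_apply, Equiv.swap_apply_of_ne_of_ne hki hkM]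
            exact (mem_Fm.1 hw) k h
        obtain ⟨L', hL', hb'⟩ := ih w' hw'
        refine ⟨L' ++ [(i, M)], ⟨?_, ?_, ?_⟩, ?_⟩
        · intro p hp
          rcases List.mem_append.1 hp with h | h
          · exact hL'.1 p h
          · simp at h; rw [h]; exact hiM
        · rw [List.map_append]; unfold List.Chain'; rw [List.isChain_append]
          refine ⟨hL'.2.1, by simp, ?_⟩
          intro x hx y hy
          simp only [List.map_cons, List.map_nil, List.head?_cons, Option.mem_def,
            Option.some.injEq] at hy
          have hxmem : x ∈ L'.map Prod.snd := List.mem_of_mem_getLast? hx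
          obtain ⟨p, hp, hpx⟩ := List.mem_map.1 hxmem
          have : (x : ℕ) < m := by rw [← hpx]; exact hb' p hp
          rw [← hy]
          simp only [Fin.lt_def, hM]
          omega
        · rw [List.map_append, List.prod_append]
          simp only [List.map_cons, List.map_nil, List.prod_cons, List.prod_nil, mul_one]
          rw [hL'.2.2, hw'def, mul_assoc, Equiv.swap_mul_self, mul_one]
        · intro p hp
          rcases List.mem_append.1 hp with h | h
          · exact Nat.lt_succ_of_lt (hb' p h)
          · simp at h; rw [h]; simp [hM]
    · have hw' : w ∈ Fm n m := by
        rw [mem_Fm]; intro k hk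
        exact absurd k.isLt (by omega)
      obtain ⟨L, hL, hb⟩ := ih w hw'
      exact ⟨L, hL, fun p hp => Nat.lt_succ_of_lt (hb p hp)⟩

lemma Fm_inv {m : ℕ} {w : Equiv.Perm (Fin n)} (hw : w ∈ Fm n m) : w⁻¹ ∈ Fm n m := by
  rw [mem_Fm] at hw ⊢
  intro k hk
  calc w⁻¹ k = w⁻¹ (w k) := by rw [hw k hk]
  _ = k := w.symm_apply_apply k

lemma Fm_mono {m m' : ℕ} (h : m ≤ m') {w : Equiv.Perm (Fin n)} (hw : w ∈ Fm n m) :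
    w ∈ Fm n m' := by
  rw [mem_Fm] at hw ⊢
  exact fun k hk => hw k (le_trans h hk)

section sorpart

lemma winv_le (m : ℕ) (hmn : m < n) (w : Equiv.Perm (Fin n)) (hw : w ∈ Fm n (m+1)) : ((w⁻¹ ⟨m, hmn⟩ : Fin n) : ℕ) ≤ m := by
  by_contra h
  push_neg at h
  have := (mem_Fm.1 hw) (w⁻¹ ⟨m, hmn⟩) h
  have h2 : w (w⁻¹ ⟨m, hmn⟩) = ⟨m, hmn⟩ := w.apply_symm_apply _
  rw [this] at h2
  rw [h2] at h
  simp at h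

lemma sor_swap_mem (m : ℕ) (hmn : m < n) (w : Equiv.Perm (Fin n)) (hw : w ∈ Fm n (m+1)) : w * Equiv.swap (w⁻¹ ⟨m, hmn⟩) ⟨m, hmn⟩ ∈ Fm n m := by
  set M : Fin n := ⟨m, hmn⟩
  set i : Fin n := w⁻¹ M with hi
  rw [mem_Fm]
  intro k hk
  rcases eq_or_lt_of_le hk with h | h
  · have hk' : k = M := Fin.ext h.symm
    rw [hk']
    simp only [Equiv.Perm.mul_apply, Equiv.swap_apply_right]
    exact w.apply_symm_apply M
  · have hki : k ≠ i := by
      intro h'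
      have := winv_le m hmn w hw
      rw [← hi, ← h'] at this
      omega
    have hkM : k ≠ M := by
      intro h'
      rw [h'] at h
      have : (M:ℕ) = m := rfl
      omega
    simp only [Equiv.Perm.mul_apply, Equiv.swap_apply_of_ne_of_ne hki hkM]
    exact (mem_Fm.1 hw) k h

lemma sor_decomp (m : ℕ) (hmn : m < n) (w : Equiv.Perm (Fin n)) (hw : w ∈ Fm n (m+1)) (sor : Equiv.Perm (Fin n) → ℕ)
    (hsor : ∀ w L, SortFactA w L → sor w = (L.map fun p => (p.2 : ℕ) - (p.1 : ℕ)).sum) :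
    sor w = sor (w * Equiv.swap (w⁻¹ ⟨m, hmn⟩) ⟨m, hmn⟩) + (m - ((w⁻¹ ⟨m, hmn⟩ : Fin n) : ℕ)) := by
  set M : Fin n := ⟨m, hmn⟩ with hM
  set i : Fin n := w⁻¹ M with hi
  set w' := w * Equiv.swap i M with hw'def
  have hile : (i:ℕ) ≤ m := winv_le m hmn w hw
  have hw' : w' ∈ Fm n m := sor_swap_mem m hmn w hw
  obtain ⟨L', hL', hb'⟩ := exists_fact m w' hw'
  have hsor' : sor w' = (L'.map fun p => (p.2 : ℕ) - (p.1 : ℕ)).sum := hsor w' L' hL'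
  by_cases hiM : i = M
  · have : Equiv.swap i M = 1 := by rw [hiM]; exact Equiv.swap_self M
    have hww : w' = w := by rw [hw'def, this, mul_one]
    have : (i:ℕ) = m := by rw [hiM]
    rw [hww] at hsor' ⊢
    omega
  · have hiltM : i < M := by
      have h1 : (i:ℕ) ≠ m := fun h => hiM (Fin.ext (by simp [hM, h]))
      simp only [Fin.lt_def, hM, Fin.val_mk]
      omega
    have hfact : SortFactA w (L' ++ [(i, M)]) := by
      refine ⟨?_, ?_, ?_⟩
      · intro p hp
        rcases List.mem_append.1 hp with h | h
        · exact hL'.1 p h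
        · simp at h; rw [h]; exact hiltM
      · rw [List.map_append]; unfold List.Chain'; rw [List.isChain_append]
        refine ⟨hL'.2.1, by simp, ?_⟩
        intro x hx y hy
        simp only [List.map_cons, List.map_nil, List.head?_cons, Option.mem_def,
          Option.some.injEq] at hy
        have hxmem : x ∈ L'.map Prod.snd := List.mem_of_mem_getLast? hx
        obtain ⟨p, hp, hpx⟩ := List.mem_map.1 hxmem
        have : (x : ℕ) < m := by rw [← hpx]; exact hb' p hp
        rw [← hy]
        simp only [Fin.lt_def, hM, Fin.val_mk]
        omega
      · rw [List.map_append, List.prod_append]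
        simp only [List.map_cons, List.map_nil, List.prod_cons, List.prod_nil, mul_one]
        rw [hL'.2.2, hw'def, mul_assoc, Equiv.swap_mul_self, mul_one]
    have := hsor w _ hfact
    rw [List.map_append, List.sum_append] at this
    simp only [List.map_cons, List.map_nil, List.sum_cons, List.sum_nil, add_zero] at this
    rw [this, hsor']

end sorpart

section stepsor

variable {R : Type} [CommRing R]

lemma step_sor (q : R) (sor : Equiv.Perm (Fin n) → ℕ)
    (hsor : ∀ w L, SortFactA w L → sor w = (L.map fun p => (p.2 : ℕ) - (p.1 : ℕ)).sum)
    (m : ℕ) (hmn : m < n) :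
    ∑ w ∈ Fm n (m+1), q ^ sor w =
      (∑ j ∈ Finset.range (m+1), q ^ j) * ∑ w ∈ Fm n m, q ^ sor w := by
  have key : ∑ w ∈ Fm n (m+1), q ^ sor w =
      ∑ p ∈ (Finset.range (m+1)) ×ˢ Fm n m, q ^ ((m - p.1) + sor p.2) := by
    refine Finset.sum_bij' (fun w _ => (((w⁻¹ ⟨m, hmn⟩ : Fin n) : ℕ), w * Equiv.swap (w⁻¹ ⟨m, hmn⟩) ⟨m, hmn⟩))
      (fun p hp => p.2 * Equiv.swap ⟨p.1, lt_of_le_of_lt (Nat.lt_succ_iff.1 (Finset.mem_range.1 (Finset.mem_product.1 hp).1)) hmn⟩ ⟨m, hmn⟩)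
      ?_ ?_ ?_ ?_ ?_
    · intro w hw
      rw [Finset.mem_product]
      exact ⟨Finset.mem_range.2 (Nat.lt_succ_of_le (winv_le m hmn w hw)), sor_swap_mem m hmn w hw⟩
    · intro p hp
      obtain ⟨hp1, hp2⟩ := Finset.mem_product.1 hp
      set I : Fin n := ⟨p.1, lt_of_le_of_lt (Nat.lt_succ_iff.1 (Finset.mem_range.1 hp1)) hmn⟩
      rw [mem_Fm]
      intro k hk
      have hkI : k ≠ I := by
        intro h
        have : (I:ℕ) = p.1 := rfl
        have := Finset.mem_range.1 hp1
        rw [h] at hk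
        omega
      have hkM : k ≠ ⟨m, hmn⟩ := by
        intro h
        rw [h] at hk
        simp at hk
      simp only [Equiv.Perm.mul_apply, Equiv.swap_apply_of_ne_of_ne hkI hkM]
      exact (mem_Fm.1 hp2) k (le_trans (Nat.le_succ m) hk)
    · intro w hw
      simp only [Fin.eta]
      rw [mul_assoc, Equiv.swap_mul_self, mul_one]
    · intro p hp
      obtain ⟨hp1, hp2⟩ := Finset.mem_product.1 hp
      set I : Fin n := ⟨p.1, lt_of_le_of_lt (Nat.lt_succ_iff.1 (Finset.mem_range.1 hp1)) hmn⟩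
      set M : Fin n := ⟨m, hmn⟩
      have hinv : (p.2 * Equiv.swap I M)⁻¹ M = I := by
        rw [mul_inv_rev, Equiv.Perm.mul_apply, Equiv.swap_inv]
        have : p.2⁻¹ M = M := (mem_Fm.1 (Fm_inv hp2)) M (le_refl m)
        rw [this, Equiv.swap_apply_right]
      ext
      · simp only [hinv]; rfl
      · simp only [hinv, mul_assoc, Equiv.swap_mul_self, mul_one]
    · intro w hw
      dsimp only
      rw [sor_decomp m hmn w hw sor hsor, add_comm]
  rw [key, Finset.sum_product]
  have : ∀ i ∈ Finset.range (m+1), ∑ w ∈ Fm n m, q ^ ((m - i) + sor w)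
      = q ^ (m - i) * ∑ w ∈ Fm n m, q ^ sor w := by
    intro i _
    rw [Finset.mul_sum]
    exact Finset.sum_congr rfl fun w _ => by rw [pow_add]
  rw [Finset.sum_congr rfl this, ← Finset.sum_mul]
  congr 1
  rw [← Finset.sum_range_reflect (fun j => q ^ j) (m+1)]
  exact Finset.sum_congr rfl fun j hj => by rw [show m + 1 - 1 - j = m - j by omega]

end stepsor


section invpart

variable {n : ℕ}

noncomputable def cyc' (v m : Fin n) : Equiv.Perm (Fin n) :=
  if h : v ≤ m then cyc v m h else 1

lemma cyc'_self {v m : Fin n} (hvm : v ≤ m) : cyc' v m v = m := by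
  rw [cyc', dif_pos hvm]; exact cyc_self v m hvm

lemma cyc'_of_gt {v m x : Fin n} (hvm : v ≤ m) (h : m < x) : cyc' v m x = x := by
  rw [cyc', dif_pos hvm]; exact cyc_of_gt hvm h

lemma cyc'_le {v m x : Fin n} (hvm : v ≤ m) (h : (x:ℕ) ≤ m) :
    ((cyc' v m x : Fin n) : ℕ) ≤ m := by
  rw [cyc', dif_pos hvm]; exact cyc_le hvm h

lemma cyc'_mono {v m x y : Fin n} (hvm : v ≤ m) (hx : x ≠ v) (hy : y ≠ v) :
    (cyc' v m x < cyc' v m y ↔ x < y) := by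
  rw [cyc', dif_pos hvm]; exact cyc_mono hvm hx hy

lemma wM_le (m : ℕ) (hmn : m < n) (w : Equiv.Perm (Fin n)) (hw : w ∈ Fm n (m+1)) :
    ((w ⟨m, hmn⟩ : Fin n) : ℕ) ≤ m := by
  have := Fm_val hw (a := ⟨m, hmn⟩) (by simp)
  omega

lemma inv_cyc_mem (m : ℕ) (hmn : m < n) (w : Equiv.Perm (Fin n)) (hw : w ∈ Fm n (m+1)) :
    cyc' (w ⟨m, hmn⟩) ⟨m, hmn⟩ * w ∈ Fm n m := by
  set M : Fin n := ⟨m, hmn⟩ with hM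
  set v : Fin n := w M with hv
  have hvle : (v:ℕ) ≤ m := wM_le m hmn w hw
  have hvM : v ≤ M := by simp only [Fin.le_def, hM, Fin.val_mk]; exact hvle
  rw [mem_Fm]
  intro k hk
  rcases eq_or_lt_of_le hk with h | h
  · have hk' : k = M := Fin.ext h.symm
    rw [hk']
    simp only [Equiv.Perm.mul_apply, ← hv]
    exact cyc'_self hvM
  · have hwk : w k = k := (mem_Fm.1 hw) k h
    have hMk : M < k := by simp only [Fin.lt_def, hM, Fin.val_mk]; exact h
    simp only [Equiv.Perm.mul_apply, hwk]
    exact cyc'_of_gt hvM hMk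

lemma inv_decomp (m : ℕ) (hmn : m < n) (w : Equiv.Perm (Fin n)) (hw : w ∈ Fm n (m+1)) :
    invA w = invA (cyc' (w ⟨m, hmn⟩) ⟨m, hmn⟩ * w) + (m - ((w ⟨m, hmn⟩ : Fin n) : ℕ)) := by
  set M : Fin n := ⟨m, hmn⟩ with hM
  set v : Fin n := w M with hv
  set c : Equiv.Perm (Fin n) := cyc' v M with hc
  set w' : Equiv.Perm (Fin n) := c * w with hw'
  have hMval : (M : ℕ) = m := rfl
  have hvle : (v:ℕ) ≤ m := wM_le m hmn w hw
  have hvM : v ≤ M := by simp only [Fin.le_def, hMval]; exact hvle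
  have hwval : ∀ a : Fin n, (a:ℕ) ≤ m → ((w a : Fin n):ℕ) ≤ m := by
    intro a ha
    have := Fm_val hw (a := a) (by omega)
    omega
  have hwfix : ∀ k : Fin n, m < (k:ℕ) → w k = k := fun k hk => (mem_Fm.1 hw) k hk
  have hwane : ∀ a : Fin n, a ≠ M → w a ≠ v := fun a h h' => h (w.injective h')
  set S : Finset (Fin n × Fin n) :=
    Finset.univ.filter (fun p : Fin n × Fin n => p.1 < p.2 ∧ w p.2 < w p.1) with hS
  set S' : Finset (Fin n × Fin n) :=
    Finset.univ.filter (fun p : Fin n × Fin n => p.1 < p.2 ∧ w' p.2 < w' p.1) with hS'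
  have hsplit : (S.filter (fun p => p.2 = M)).card +
      (S.filter (fun p => ¬ p.2 = M)).card = S.card :=
    Finset.card_filter_add_card_filter_not _
  have hsplit' : (S'.filter (fun p => p.2 = M)).card +
      (S'.filter (fun p => ¬ p.2 = M)).card = S'.card :=
    Finset.card_filter_add_card_filter_not _
  -- S' has no inversions ending at M
  have hA : S'.filter (fun p => p.2 = M) = ∅ := by
    ext p
    simp only [Finset.notMem_empty, iff_false, Finset.mem_filter, Finset.mem_univ, true_and,
      hS', not_and]
    rintro ⟨h1, h2⟩ h3
    rw [h3] at h1 h2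
    -- w' M = M, w' p.1 ≤ m
    have e1 : w' M = M := by
      simp only [hw', Equiv.Perm.mul_apply, ← hv, hc]
      exact cyc'_self hvM
    have e2 : ((w' p.1 : Fin n) : ℕ) ≤ m := by
      have : ((w p.1 : Fin n) : ℕ) ≤ m := hwval p.1 (by
        have := h1; simp only [Fin.lt_def, hMval] at this; omega)
      simp only [hw', Equiv.Perm.mul_apply, hc]
      exact cyc'_le hvM this
    rw [e1] at h2
    have : (M:ℕ) < (w' p.1 : Fin n) := h2
    omega
  -- inversions not ending at M agree
  have hB : S.filter (fun p => ¬ p.2 = M) = S'.filter (fun p => ¬ p.2 = M) := by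
    ext p
    simp only [Finset.mem_filter, Finset.mem_univ, true_and, hS, hS']
    have main : p.1 < p.2 → ¬ p.2 = M → (w p.2 < w p.1 ↔ w' p.2 < w' p.1) := by
      intro h12 h2M
      by_cases h1M : p.1 = M
      · rw [h1M]
        have hp2 : (M:ℕ) < (p.2:ℕ) := by rw [← h1M]; exact h12
        have e1 : w p.2 = p.2 := hwfix p.2 (by omega)
        have e2 : w' p.2 = p.2 := by
          simp only [hw', Equiv.Perm.mul_apply, e1, hc]
          exact cyc'_of_gt hvM (by simp only [Fin.lt_def, hMval]; omega)
        have e3 : w' M = M := by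
          simp only [hw', Equiv.Perm.mul_apply, ← hv, hc]
          exact cyc'_self hvM
        rw [e1, e2, e3, ← hv]
        constructor
        · intro h; exact absurd (lt_trans h (by simp only [Fin.lt_def, hMval]; omega)) (lt_irrefl _)
        · intro h; exact absurd (lt_trans h (by simp only [Fin.lt_def, hMval]; omega)) (lt_irrefl _)
      · have k1 : w p.1 ≠ v := hwane p.1 h1M
        have k2 : w p.2 ≠ v := hwane p.2 h2M
        simp only [hw', Equiv.Perm.mul_apply, hc]
        exact (cyc'_mono hvM k2 k1).symm
    constructor
    · rintro ⟨⟨h1, h2⟩, h3⟩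
      exact ⟨⟨h1, (main h1 h3).1 h2⟩, h3⟩
    · rintro ⟨⟨h1, h2⟩, h3⟩
      exact ⟨⟨h1, (main h1 h3).2 h2⟩, h3⟩
  -- inversions ending at M number m - v
  have hC : (S.filter (fun p => p.2 = M)).card = m - (v:ℕ) := by
    have : (Finset.Ioc v M).card = m - (v:ℕ) := by
      rw [Fin.card_Ioc]
    rw [← this]
    refine Finset.card_bij' (fun p _ => w p.1) (fun u _ => (w⁻¹ u, M)) ?_ ?_ ?_ ?_
    · intro p hp
      simp only [Finset.mem_filter, Finset.mem_univ, true_and, hS] at hp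
      obtain ⟨⟨h1, h2⟩, h3⟩ := hp
      rw [h3] at h1 h2
      rw [Finset.mem_Ioc]
      constructor
      · rw [hv]; exact h2
      · have : ((w p.1 : Fin n):ℕ) ≤ m := hwval p.1 (by
          have := h1; simp only [Fin.lt_def, hMval] at this; omega)
        simp only [Fin.le_def, hMval]; exact this
    · intro u hu
      rw [Finset.mem_Ioc] at hu
      obtain ⟨h1, h2⟩ := hu
      simp only [Finset.mem_filter, Finset.mem_univ, true_and, hS]
      have huM : (u:ℕ) ≤ m := by simp only [Fin.le_def, hMval] at h2; exact h2
      have hinvle : ((w⁻¹ u : Fin n):ℕ) ≤ m := by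
        have := Fm_val (Fm_inv hw) (a := u) (by omega)
        omega
      have hne : w⁻¹ u ≠ M := by
        intro h
        have : u = w M := by rw [← h, Equiv.Perm.coe_inv, Equiv.apply_symm_apply]
        rw [← hv] at this
        rw [this] at h1
        exact lt_irrefl _ h1
      have hltM : w⁻¹ u < M := by
        simp only [Fin.lt_def, hMval]
        have : ((w⁻¹ u : Fin n):ℕ) ≠ m := fun h => hne (Fin.ext (by rw [h, hMval]))
        omega
      refine ⟨⟨hltM, ?_⟩, trivial⟩
      rw [Equiv.Perm.coe_inv, Equiv.apply_symm_apply, ← hv]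
      exact h1
    · intro p hp
      simp only [Finset.mem_filter, Finset.mem_univ, true_and, hS] at hp
      obtain ⟨⟨h1, h2⟩, h3⟩ := hp
      have : w⁻¹ (w p.1) = p.1 := Equiv.symm_apply_apply _ _
      rw [Prod.ext_iff]
      exact ⟨this, h3.symm⟩
    · intro u hu
      exact Equiv.apply_symm_apply _ _
  -- assemble
  have eS : invA w = S.card := rfl
  have eS' : invA w' = S'.card := rfl
  rw [eS, eS', ← hsplit, ← hsplit', hA, hB, hC]
  simp only [Finset.card_empty, zero_add]
  omega

lemma invA_one : invA (1 : Equiv.Perm (Fin n)) = 0 := by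
  rw [invA, Finset.card_eq_zero]
  ext p
  simp only [Finset.mem_filter, Finset.mem_univ, true_and, Finset.notMem_empty, iff_false,
    Equiv.Perm.one_apply, not_and]
  exact fun h => not_lt_of_gt (Finset.mem_filter.1 h).2.1 (Finset.mem_filter.1 h).2.2

end invpart

section stepinv

variable {n : ℕ} {R : Type} [CommRing R]

lemma step_inv (q : R) (m : ℕ) (hmn : m < n) :
    ∑ w ∈ Fm n (m+1), q ^ invA w =
      (∑ j ∈ Finset.range (m+1), q ^ j) * ∑ w ∈ Fm n m, q ^ invA w := by
  have key : ∑ w ∈ Fm n (m+1), q ^ invA w =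
      ∑ p ∈ (Finset.range (m+1)) ×ˢ Fm n m, q ^ ((m - p.1) + invA p.2) := by
    refine Finset.sum_bij'
      (fun w _ => (((w ⟨m, hmn⟩ : Fin n) : ℕ), cyc' (w ⟨m, hmn⟩) ⟨m, hmn⟩ * w))
      (fun p hp => (cyc' ⟨p.1, lt_of_le_of_lt (Nat.lt_succ_iff.1
          (Finset.mem_range.1 (Finset.mem_product.1 hp).1)) hmn⟩ ⟨m, hmn⟩)⁻¹ * p.2)
      ?_ ?_ ?_ ?_ ?_
    · intro w hw
      rw [Finset.mem_product]
      exact ⟨Finset.mem_range.2 (Nat.lt_succ_of_le (wM_le m hmn w hw)),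
        inv_cyc_mem m hmn w hw⟩
    · intro p hp
      obtain ⟨hp1, hp2⟩ := Finset.mem_product.1 hp
      have hple : p.1 ≤ m := Nat.lt_succ_iff.1 (Finset.mem_range.1 hp1)
      set V : Fin n := ⟨p.1, lt_of_le_of_lt hple hmn⟩
      set M : Fin n := ⟨m, hmn⟩
      have hVM : V ≤ M := by simp only [Fin.le_def, Fin.val_mk]; exact hple
      rw [mem_Fm]
      intro k hk
      have hwk : p.2 k = k := (mem_Fm.1 hp2) k (le_trans (Nat.le_succ m) hk)
      have hMk : M < k := by show m < (k:ℕ); omega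
      have hck : cyc' V M k = k := cyc'_of_gt hVM hMk
      simp only [Equiv.Perm.mul_apply, hwk]
      calc (cyc' V M)⁻¹ k = (cyc' V M)⁻¹ (cyc' V M k) := by rw [hck]
      _ = k := Equiv.symm_apply_apply _ _
    · intro w hw
      simp only [Fin.eta]
      rw [inv_mul_cancel_left]
    · intro p hp
      obtain ⟨hp1, hp2⟩ := Finset.mem_product.1 hp
      have hple : p.1 ≤ m := Nat.lt_succ_iff.1 (Finset.mem_range.1 hp1)
      set V : Fin n := ⟨p.1, lt_of_le_of_lt hple hmn⟩ with hV
      set M : Fin n := ⟨m, hmn⟩ with hM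
      have hVM : V ≤ M := by simp only [Fin.le_def, Fin.val_mk]; exact hple
      have hp2M : p.2 M = M := (mem_Fm.1 hp2) M (by simp [hM])
      have hwM : ((cyc' V M)⁻¹ * p.2) M = V := by
        simp only [Equiv.Perm.mul_apply, hp2M]
        calc (cyc' V M)⁻¹ M = (cyc' V M)⁻¹ (cyc' V M V) := by rw [cyc'_self hVM]
        _ = V := Equiv.symm_apply_apply _ _
      ext
      · simp only [hwM, Fin.val_mk]; rfl
      · simp only [hwM]
        rw [mul_inv_cancel_left]
    · intro w hw
      dsimp only
      rw [inv_decomp m hmn w hw, add_comm]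
  rw [key, Finset.sum_product]
  have : ∀ i ∈ Finset.range (m+1), ∑ w ∈ Fm n m, q ^ ((m - i) + invA w)
      = q ^ (m - i) * ∑ w ∈ Fm n m, q ^ invA w := by
    intro i _
    rw [Finset.mul_sum]
    exact Finset.sum_congr rfl fun w _ => by rw [pow_add]
  rw [Finset.sum_congr rfl this, ← Finset.sum_mul]
  congr 1
  rw [← Finset.sum_range_reflect (fun j => q ^ j) (m+1)]
  exact Finset.sum_congr rfl fun j hj => by rw [show m + 1 - 1 - j = m - j by omega]

end stepinv

section mainpart

variable {n : ℕ} {R : Type} [CommRing R]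

lemma gf (q : R) (s : Equiv.Perm (Fin n) → ℕ) (hs1 : s 1 = 0)
    (hstep : ∀ m, m < n → ∑ w ∈ Fm n (m+1), q ^ s w =
      (∑ j ∈ Finset.range (m+1), q ^ j) * ∑ w ∈ Fm n m, q ^ s w) :
    ∑ w : Equiv.Perm (Fin n), q ^ s w =
      ∏ i ∈ Finset.range n, ∑ j ∈ Finset.range (i+1), q ^ j := by
  have key : ∀ m, m ≤ n → ∑ w ∈ Fm n m, q ^ s w =
      ∏ i ∈ Finset.range m, ∑ j ∈ Finset.range (i+1), q ^ j := by
    intro m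
    induction m with
    | zero =>
      intro _
      have h1 : Fm n 0 = {1} := by
        ext w
        simp only [Finset.mem_singleton]
        constructor
        · exact Fm_zero
        · intro h; rw [h]; exact mem_Fm.2 fun k _ => rfl
      rw [h1]
      simp [hs1]
    | succ m ih =>
      intro h
      rw [hstep m (by omega), ih (by omega), Finset.prod_range_succ, mul_comm]
  have := key n le_rfl
  rwa [Fm_univ] at this

end mainpart

/-- The sorting index is Mahonian:
`∑_{w ∈ S_n} q^{sor w} = (1+q)(1+q+q²)⋯(1+q+⋯+q^{n-1}) = ∑_{w ∈ S_n} q^{inv w}`. -/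
theorem sor_is_Mahonian {R : Type} [CommRing R] (n : ℕ) (q : R)
    (sor : Equiv.Perm (Fin n) → ℕ)
    (hsor : ∀ w L, SortFactA w L → sor w = (L.map fun p => (p.2 : ℕ) - (p.1 : ℕ)).sum) :
    (∑ w : Equiv.Perm (Fin n), q ^ sor w =
        ∏ i ∈ Finset.range n, ∑ j ∈ Finset.range (i + 1), q ^ j) ∧
      ∑ w : Equiv.Perm (Fin n), q ^ sor w = ∑ w : Equiv.Perm (Fin n), q ^ invA w := by
  have hsor1 : sor 1 = 0 := by
    have h := hsor 1 [] ⟨fun p hp => absurd hp List.not_mem_nil, List.isChain_nil, by simp⟩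
    simpa using h
  have h1 := gf q sor hsor1 (fun m hmn => step_sor q sor hsor m hmn)
  have h2 := gf (n := n) q invA (invA_one (n := n)) (fun m hmn => step_inv (n := n) q m hmn)
  exact ⟨h1, h1.trans h2.symm⟩
end
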